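/- arXiv:1902.10075 — 8 statements merged into one kernel-verified Lean document; each statement's English description precedes it below -/
import Mathlib

section
/- Let n ≥ 2 and α ∈ ℝ. The function u(x) = (log|x|)^α satisfies -div(|∇u|^{n-2}∇u) ≥ 0 on {x ∈ ℝⁿ : |x| > 1} if and only if 0 ≤ α ≤ 1. -/
open Real

/-- The divergence of a vector field `F : ℝⁿ → ℝⁿ`. -/
noncomputable def vdiv (n : ℕ) (F : EuclideanSpace ℝ (Fin n) → EuclideanSpace ℝ (Fin n))
    (x : EuclideanSpace ℝ (Fin n)) : ℝ :=
  ∑ i : Fin n, fderiv ℝ F x (EuclideanSpace.single i (1 : ℝ)) i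

open InnerProductSpace RealInnerProductSpace

variable {E : Type*} [NormedAddCommGroup E] [InnerProductSpace ℝ E] [CompleteSpace E]

lemma hasFDerivAt_norm' (x : E) (hx : x ≠ 0) :
    HasFDerivAt (fun y : E => ‖y‖) (‖x‖⁻¹ • innerSL ℝ x) x := by
  have h1 : HasFDerivAt (fun y : E => ‖y‖ ^ 2) (2 • (innerSL ℝ x)) x :=
    (hasStrictFDerivAt_norm_sq x).hasFDerivAt
  have h2 : HasDerivAt Real.sqrt (1 / (2 * Real.sqrt (‖x‖ ^ 2))) (‖x‖ ^ 2) :=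
    Real.hasDerivAt_sqrt (pow_ne_zero 2 (norm_ne_zero_iff.mpr hx))
  have h3 := h2.comp_hasFDerivAt x h1
  have hs : Real.sqrt (‖x‖ ^ 2) = ‖x‖ := Real.sqrt_sq (norm_nonneg x)
  rw [show sqrt ∘ (fun y : E => ‖y‖ ^ 2) = fun y : E => ‖y‖ from funext fun y => Real.sqrt_sq (norm_nonneg y)] at h3
  refine h3.congr_fderiv (Eq.symm ?_)
  rw [hs]
  ext y
  simp [ContinuousLinearMap.smul_apply, two_smul]
  have : ‖x‖ ≠ 0 := norm_ne_zero_iff.mpr hx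
  field_simp
  ring

lemma hasGradientAt_logpow (α : ℝ) (x : E) (hx : 1 < ‖x‖) :
    HasGradientAt (fun z : E => Real.log ‖z‖ ^ α)
      ((α * Real.log ‖x‖ ^ (α - 1) * (‖x‖ ^ 2)⁻¹) • x) x := by
  have hx0 : x ≠ 0 := by
    intro h; rw [h, norm_zero] at hx; linarith
  have hr0 : (0:ℝ) < ‖x‖ := lt_trans one_pos hx
  have hlog : 0 < Real.log ‖x‖ := Real.log_pos hx
  have h1 : HasDerivAt Real.log ‖x‖⁻¹ ‖x‖ := Real.hasDerivAt_log (ne_of_gt hr0)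
  have h2 : HasDerivAt (fun t : ℝ => t ^ α) (α * Real.log ‖x‖ ^ (α - 1)) (Real.log ‖x‖) :=
    Real.hasDerivAt_rpow_const (Or.inl (ne_of_gt hlog))
  have h3 : HasDerivAt (fun t : ℝ => Real.log t ^ α)
      (α * Real.log ‖x‖ ^ (α - 1) * ‖x‖⁻¹) ‖x‖ := h2.comp ‖x‖ h1
  have h4 := h3.comp_hasFDerivAt x (hasFDerivAt_norm' x hx0)
  rw [hasGradientAt_iff_hasFDerivAt]
  refine h4.congr_fderiv (Eq.symm ?_)
  ext y
  simp only [InnerProductSpace.toDual_apply_apply, real_inner_smul_left,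
    ContinuousLinearMap.smul_apply, innerSL_apply_apply, smul_eq_mul, sq]
  field_simp

lemma scmagic (α N L r : ℝ) (hL : 0 < L) (hr : 0 < r) :
    (|α| * L ^ (α - 1) * (r ^ 2)⁻¹ * r) ^ (N - 2) * (α * L ^ (α - 1) * (r ^ 2)⁻¹)
      = (|α| ^ (N - 2) * α) * L ^ ((α - 1) * (N - 1)) * r ^ (-N) := by
  have hc : (r ^ 2)⁻¹ * r = r⁻¹ := by field_simp
  rw [mul_assoc (|α| * L ^ (α - 1)), hc]
  rw [Real.mul_rpow (by positivity) (by positivity),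
      Real.mul_rpow (abs_nonneg α) (by positivity)]
  rw [← Real.rpow_neg_one r, ← Real.rpow_mul hr.le, ← Real.rpow_mul hL.le]
  have e0 : (r ^ 2)⁻¹ = r ^ (-(2:ℝ)) := by
    rw [Real.rpow_neg hr.le, Real.rpow_two]
  rw [e0]
  have e1 : r ^ (-N) = r ^ (-1 * (N - 2)) * r ^ (-(2:ℝ)) := by
    rw [← Real.rpow_add hr]; congr 1; ring
  have e2 : L ^ ((α - 1) * (N - 1)) = L ^ ((α - 1) * (N - 2)) * L ^ (α - 1) := by
    rw [← Real.rpow_add hL]; congr 1; ring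
  rw [e1, e2]; ring

lemma vdiv_key (n : ℕ) (hn : 2 ≤ n) (α : ℝ) (x : EuclideanSpace ℝ (Fin n)) (hx : 1 < ‖x‖) :
    vdiv n (fun y => ‖gradient (fun z : EuclideanSpace ℝ (Fin n) => Real.log ‖z‖ ^ α) y‖
        ^ ((n : ℝ) - 2)
      • gradient (fun z : EuclideanSpace ℝ (Fin n) => Real.log ‖z‖ ^ α) y) x
    = (|α| ^ ((n : ℝ) - 2) * α) * ((α - 1) * ((n : ℝ) - 1)) *
        Real.log ‖x‖ ^ ((α - 1) * ((n : ℝ) - 1) - 1) * ‖x‖ ^ (-(n : ℝ)) := by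
  set N : ℝ := (n : ℝ) with hN
  set C : ℝ := |α| ^ (N - 2) * α with hC
  set β : ℝ := (α - 1) * (N - 1) with hβ
  set u : EuclideanSpace ℝ (Fin n) → ℝ := fun z => Real.log ‖z‖ ^ α with hu
  set h : ℝ → ℝ := fun t => C * (Real.log t ^ β * t ^ (-N)) with hh
  set G : EuclideanSpace ℝ (Fin n) → EuclideanSpace ℝ (Fin n) := fun y => h ‖y‖ • y with hG
  have hx0 : x ≠ 0 := by intro h0; rw [h0, norm_zero] at hx; linarith
  have hr0 : (0:ℝ) < ‖x‖ := lt_trans one_pos hx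
  have hL : 0 < Real.log ‖x‖ := Real.log_pos hx
  -- F = G on the region
  have hFG : ∀ y : EuclideanSpace ℝ (Fin n), 1 < ‖y‖ →
      (‖gradient u y‖ ^ (N - 2) • gradient u y) = G y := by
    intro y hy
    have hLy : 0 < Real.log ‖y‖ := Real.log_pos hy
    have hry : (0:ℝ) < ‖y‖ := lt_trans one_pos hy
    have hg := (hasGradientAt_logpow α y hy).gradient
    rw [hG, hg, norm_smul, smul_smul]
    congr 1
    have habs : ‖α * Real.log ‖y‖ ^ (α - 1) * (‖y‖ ^ 2)⁻¹‖
        = |α| * Real.log ‖y‖ ^ (α - 1) * (‖y‖ ^ 2)⁻¹ := by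
      rw [Real.norm_eq_abs, abs_mul, abs_mul, abs_inv, abs_pow, abs_norm,
        abs_of_nonneg (Real.rpow_nonneg hLy.le (α - 1))]
    rw [habs, hh, hC, hβ]
    beta_reduce
    linear_combination scmagic α N (Real.log ‖y‖) ‖y‖ hLy hry
  -- derivative of h at r = ‖x‖
  have hd1 : HasDerivAt (fun t : ℝ => Real.log t ^ β)
      (β * Real.log ‖x‖ ^ (β - 1) * ‖x‖⁻¹) ‖x‖ :=
    (Real.hasDerivAt_rpow_const (Or.inl hL.ne')).comp ‖x‖ (Real.hasDerivAt_log hr0.ne')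
  have hd2 : HasDerivAt (fun t : ℝ => t ^ (-N)) (-N * ‖x‖ ^ (-N - 1)) ‖x‖ :=
    Real.hasDerivAt_rpow_const (Or.inl hr0.ne')
  have hd3 : HasDerivAt h
      (C * (β * Real.log ‖x‖ ^ (β - 1) * ‖x‖⁻¹ * ‖x‖ ^ (-N)
        + Real.log ‖x‖ ^ β * (-N * ‖x‖ ^ (-N - 1)))) ‖x‖ := (hd1.mul hd2).const_mul C
  have hd4 := hd3.comp_hasFDerivAt x (hasFDerivAt_norm' x hx0)
  have hGder : HasFDerivAt G
      ((h ‖x‖) • ContinuousLinearMap.id ℝ (EuclideanSpace ℝ (Fin n))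
        + ((C * (β * Real.log ‖x‖ ^ (β - 1) * ‖x‖⁻¹ * ‖x‖ ^ (-N)
            + Real.log ‖x‖ ^ β * (-N * ‖x‖ ^ (-N - 1)))) • ‖x‖⁻¹ • innerSL ℝ x).smulRight x)
      x := hd4.smul (hasFDerivAt_id x)
  -- fderiv F = fderiv G
  have hopen : IsOpen {y : EuclideanSpace ℝ (Fin n) | 1 < ‖y‖} :=
    isOpen_lt continuous_const continuous_norm
  have hev : (fun y => ‖gradient u y‖ ^ (N - 2) • gradient u y) =ᶠ[nhds x] G :=
    Filter.eventuallyEq_of_mem (hopen.mem_nhds hx) hFG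
  rw [vdiv]
  rw [hev.fderiv_eq, hGder.fderiv]
  have hsum : ∑ i : Fin n, x i * x i = ‖x‖ ^ 2 := by
    rw [← real_inner_self_eq_norm_sq]
    rw [PiLp.inner_apply]
    simp [sq]
  simp only [ContinuousLinearMap.add_apply, ContinuousLinearMap.smul_apply,
    ContinuousLinearMap.smulRight_apply, ContinuousLinearMap.id_apply, innerSL_apply_apply,
    PiLp.add_apply, PiLp.smul_apply, smul_eq_mul]
  have hinner : ∀ i : Fin n, ⟪x, EuclideanSpace.single i (1:ℝ)⟫_ℝ = x i := by
    intro i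
    simp [PiLp.inner_apply, EuclideanSpace.single_apply]
  simp only [hinner, EuclideanSpace.single_apply]
  rw [Finset.sum_add_distrib]
  simp only [Finset.sum_ite_eq', Finset.mem_univ, if_true]
  rw [Finset.sum_const]
  set K : ℝ := C * (β * Real.log ‖x‖ ^ (β - 1) * ‖x‖⁻¹ * ‖x‖ ^ (-N)
      + Real.log ‖x‖ ^ β * (-N * ‖x‖ ^ (-N - 1))) with hK
  have hre : ∀ i : Fin n, K * (‖x‖⁻¹ * x i) * x i = K * ‖x‖⁻¹ * (x i * x i) :=
    fun i => by ring
  rw [Finset.sum_congr rfl (fun i _ => hre i), ← Finset.mul_sum, hsum]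
  rw [Finset.card_univ, Fintype.card_fin, nsmul_eq_mul]
  rw [hK, hh]
  beta_reduce
  rw [Real.rpow_sub hr0, Real.rpow_one, ← hN]
  have hrne : ‖x‖ ≠ 0 := hr0.ne'
  field_simp
  ring

theorem log_power_supersolution_iff
    (n : ℕ) (hn : 2 ≤ n) (α : ℝ)
    (u : EuclideanSpace ℝ (Fin n) → ℝ) (hu : u = fun x => Real.log ‖x‖ ^ α) :
    (∀ x : EuclideanSpace ℝ (Fin n), 1 < ‖x‖ →
        0 ≤ -vdiv n (fun y => ‖gradient u y‖ ^ ((n : ℝ) - 2) • gradient u y) x)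
      ↔ (0 ≤ α ∧ α ≤ 1) := by
  subst hu
  have hN1 : (1:ℝ) ≤ (n:ℝ) - 1 := by
    have : (2:ℝ) ≤ (n:ℝ) := by exact_mod_cast hn
    linarith
  constructor
  · intro H
    set x₀ : EuclideanSpace ℝ (Fin n) :=
      EuclideanSpace.single (⟨0, by omega⟩ : Fin n) (Real.exp 1) with hx₀
    have hnorm : ‖x₀‖ = Real.exp 1 := by
      rw [hx₀, EuclideanSpace.norm_single, Real.norm_eq_abs,
        abs_of_pos (Real.exp_pos 1)]
    have he1 : (1:ℝ) < Real.exp 1 := by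
      calc (1:ℝ) = Real.exp 0 := Real.exp_zero.symm
      _ < Real.exp 1 := Real.exp_lt_exp.mpr one_pos
    have hx₀n : 1 < ‖x₀‖ := by rw [hnorm]; exact he1
    have := H x₀ hx₀n
    rw [vdiv_key n hn α x₀ hx₀n, hnorm, Real.log_exp, Real.one_rpow] at this
    have hEpos : 0 < Real.exp 1 ^ (-(n:ℝ)) := Real.rpow_pos_of_pos (Real.exp_pos 1) _
    rw [mul_one] at this
    have hkey : (|α| ^ ((n:ℝ) - 2) * α) * ((α - 1) * ((n:ℝ) - 1)) ≤ 0 := by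
      by_contra hc
      push_neg at hc
      nlinarith [mul_pos hc hEpos]
    constructor
    · by_contra hc
      push_neg at hc
      have habs : 0 < |α| ^ ((n:ℝ) - 2) := Real.rpow_pos_of_pos (abs_pos.mpr hc.ne) _
      have : 0 < (|α| ^ ((n:ℝ) - 2) * α) * ((α - 1) * ((n:ℝ) - 1)) :=
        mul_pos_of_neg_of_neg (mul_neg_of_pos_of_neg habs hc)
          (mul_neg_of_neg_of_pos (by linarith) (by linarith))
      linarith
    · by_contra hc
      push_neg at hc
      have habs : 0 < |α| ^ ((n:ℝ) - 2) :=
        Real.rpow_pos_of_pos (abs_pos.mpr (by linarith)) _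
      have : 0 < (|α| ^ ((n:ℝ) - 2) * α) * ((α - 1) * ((n:ℝ) - 1)) :=
        mul_pos (mul_pos habs (by linarith))
          (mul_pos (by linarith) (by linarith))
      linarith
  · rintro ⟨h0, h1⟩ x hx
    rw [vdiv_key n hn α x hx]
    have hL : 0 < Real.log ‖x‖ := Real.log_pos hx
    have hr : (0:ℝ) < ‖x‖ := lt_trans one_pos hx
    have p1 : 0 < Real.log ‖x‖ ^ ((α - 1) * ((n:ℝ) - 1) - 1) := Real.rpow_pos_of_pos hL _
    have p2 : 0 < ‖x‖ ^ (-(n:ℝ)) := Real.rpow_pos_of_pos hr _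
    have hCn : 0 ≤ |α| ^ ((n:ℝ) - 2) * α :=
      mul_nonneg (Real.rpow_nonneg (abs_nonneg α) _) h0
    have hβn : (α - 1) * ((n:ℝ) - 1) ≤ 0 :=
      mul_nonpos_of_nonpos_of_nonneg (by linarith) (by linarith)
    have : (|α| ^ ((n:ℝ) - 2) * α) * ((α - 1) * ((n:ℝ) - 1)) ≤ 0 :=
      mul_nonpos_of_nonneg_of_nonpos hCn hβn
    have h2 : (|α| ^ ((n:ℝ) - 2) * α) * ((α - 1) * ((n:ℝ) - 1))
        * Real.log ‖x‖ ^ ((α - 1) * ((n:ℝ) - 1) - 1) ≤ 0 :=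
      mul_nonpos_of_nonpos_of_nonneg this p1.le
    have h3 : (|α| ^ ((n:ℝ) - 2) * α) * ((α - 1) * ((n:ℝ) - 1))
        * Real.log ‖x‖ ^ ((α - 1) * ((n:ℝ) - 1) - 1) * ‖x‖ ^ (-(n:ℝ)) ≤ 0 :=
      mul_nonpos_of_nonpos_of_nonneg h2 p2.le
    linarith
end

section
/- Let n ≥ 2 and α ∈ ℝ. The function u(x) = (log|x|)^α satisfies -div(|∇u|^{n-2}∇u) ≤ 0 on {x ∈ ℝⁿ : |x| > 1} if and only if α ≤ 0 or α ≥ 1. -/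
open Real

private lemma aux1 (m α L r : ℝ) (hL : 0 < L) (hr : 0 < r) :
    (|α * L ^ (α-1) * ((r^2)⁻¹ : ℝ)| * r) ^ m * (α * L ^ (α-1) * (r^2)⁻¹)
      = (|α| ^ m * α) * L ^ ((α-1)*(m+1)) * ((r^2 : ℝ)) ^ (-(m+2)/2) := by
  have hL1 : (0:ℝ) < L ^ (α - 1) := Real.rpow_pos_of_pos hL _
  have h2 : ((r^2 : ℝ))⁻¹ = r ^ (-2 : ℝ) := by
    rw [← Real.rpow_natCast r 2, ← Real.rpow_neg hr.le]
    norm_num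
  have h3 : ((r^2 : ℝ)) ^ (-(m+2)/2) = r ^ (-(m+2)) := by
    rw [← Real.rpow_natCast r 2, ← Real.rpow_mul hr.le]
    congr 1
    ring
  have habs : |α * L ^ (α-1) * ((r^2)⁻¹ : ℝ)| * r = |α| * L ^ (α-1) * r ^ (-1 : ℝ) := by
    rw [abs_mul, abs_mul, abs_of_pos hL1, abs_of_pos (by positivity : (0:ℝ) < ((r^2)⁻¹ : ℝ)),
      Real.rpow_neg_one]
    field_simp
  rw [habs, h2, h3]
  rw [Real.mul_rpow (by positivity) (Real.rpow_nonneg hr.le _),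
    Real.mul_rpow (abs_nonneg _) (Real.rpow_nonneg hL.le _),
    ← Real.rpow_mul hL.le, ← Real.rpow_mul hr.le]
  rw [show |α| ^ m * L ^ ((α-1) * m) * r ^ (-1 * m) * (α * L ^ (α - 1) * r ^ (-2 : ℝ))
      = (|α| ^ m * α) * (L ^ ((α-1)*m) * L ^ (α-1)) * (r ^ (-1*m) * r ^ (-2:ℝ)) by ring,
    ← Real.rpow_add hL, ← Real.rpow_add hr]
  congr 1
  · congr 1
    ring
  · ring_nf

private lemma grad_u (n : ℕ) (α : ℝ) (y : EuclideanSpace ℝ (Fin n)) (hy : 1 < ‖y‖) :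
    HasGradientAt (fun x : EuclideanSpace ℝ (Fin n) => Real.log ‖x‖ ^ α)
      ((α * ((1/2) * Real.log (‖y‖^2)) ^ (α-1) * (‖y‖^2)⁻¹) • y) y := by
  have hy0 : 0 < ‖y‖ := lt_trans one_pos hy
  have hs0 : (0:ℝ) < ‖y‖^2 := by positivity
  have hs1 : (1:ℝ) < ‖y‖^2 := by nlinarith
  have hL : (0:ℝ) < (1/2) * Real.log (‖y‖^2) := by
    have := Real.log_pos hs1; linarith
  have hueq : (fun x : EuclideanSpace ℝ (Fin n) => Real.log ‖x‖ ^ α)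
      = fun z => ((1/2) * Real.log (‖z‖^2)) ^ α := by
    funext z
    congr 1
    rw [Real.log_pow]
    push_cast; ring
  have hφ : HasDerivAt (fun t : ℝ => ((1/2) * Real.log t) ^ α)
      ((1/2 * (‖y‖^2)⁻¹) * α * ((1/2) * Real.log (‖y‖^2)) ^ (α-1)) (‖y‖^2) :=
    ((Real.hasDerivAt_log hs0.ne').const_mul (1/2)).rpow_const (Or.inl hL.ne')
  have hns : HasFDerivAt (fun z : EuclideanSpace ℝ (Fin n) => ‖z‖^2)
      (2 • innerSL ℝ y) y := (hasStrictFDerivAt_norm_sq y).hasFDerivAt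
  have hcomp : HasFDerivAt (fun x : EuclideanSpace ℝ (Fin n) => Real.log ‖x‖ ^ α)
      (((1/2 * (‖y‖^2)⁻¹) * α * ((1/2) * Real.log (‖y‖^2)) ^ (α-1)) • (2 • innerSL ℝ y)) y := by
    rw [hueq]
    exact hφ.comp_hasFDerivAt y hns
  rw [hasGradientAt_iff_hasFDerivAt]
  refine hcomp.congr_fderiv ?_
  ext v
  simp only [InnerProductSpace.toDual_apply_apply, ContinuousLinearMap.smul_apply, innerSL_apply_apply,
    smul_eq_mul]
  rw [real_inner_smul_left]
  ring_nf

private lemma vdiv_radial (n : ℕ) (H : ℝ → ℝ) (D : ℝ)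
    (x : EuclideanSpace ℝ (Fin n)) (hH : HasDerivAt H D (‖x‖^2)) :
    vdiv n (fun y => H (‖y‖^2) • y) x = n * H (‖x‖^2) + 2 * D * ‖x‖^2 := by
  have hns : HasFDerivAt (fun z : EuclideanSpace ℝ (Fin n) => ‖z‖^2)
      (2 • innerSL ℝ x) x := (hasStrictFDerivAt_norm_sq x).hasFDerivAt
  have hHc : HasFDerivAt (fun y : EuclideanSpace ℝ (Fin n) => H (‖y‖^2))
      (D • (2 • innerSL ℝ x)) x := hH.comp_hasFDerivAt x hns
  have hG : HasFDerivAt (fun y : EuclideanSpace ℝ (Fin n) => H (‖y‖^2) • y)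
      ((H (‖x‖^2)) • ContinuousLinearMap.id ℝ (EuclideanSpace ℝ (Fin n))
        + (D • (2 • innerSL ℝ x)).smulRight x) x :=
    hHc.smul (hasFDerivAt_id x)
  have hsum : ∑ i, (x i)^2 = ‖x‖^2 := by
    rw [EuclideanSpace.norm_eq, Real.sq_sqrt (by positivity)]
    simp [sq_abs]
  unfold vdiv
  rw [hG.fderiv]
  have hterm : ∀ i : Fin n,
      ((H (‖x‖^2)) • ContinuousLinearMap.id ℝ (EuclideanSpace ℝ (Fin n))
        + (D • (2 • innerSL ℝ x)).smulRight x) (EuclideanSpace.single i (1:ℝ)) i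
      = H (‖x‖^2) + 2 * D * (x i)^2 := by
    intro i
    simp only [ContinuousLinearMap.add_apply, ContinuousLinearMap.smul_apply,
      ContinuousLinearMap.id_apply, ContinuousLinearMap.smulRight_apply, innerSL_apply_apply]
    rw [PiLp.add_apply, PiLp.smul_apply, PiLp.smul_apply]
    rw [EuclideanSpace.inner_single_right]
    simp [EuclideanSpace.single_apply]
    ring
  rw [Finset.sum_congr rfl (fun i _ => hterm i), Finset.sum_add_distrib,
    Finset.sum_const, Finset.card_univ]
  rw [← Finset.mul_sum, hsum]
  simp

theorem log_power_subsolution_iff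
    (n : ℕ) (hn : 2 ≤ n) (α : ℝ)
    (u : EuclideanSpace ℝ (Fin n) → ℝ) (hu : u = fun x => Real.log ‖x‖ ^ α) :
    (∀ x : EuclideanSpace ℝ (Fin n), 1 < ‖x‖ →
        -vdiv n (fun y => ‖gradient u y‖ ^ ((n : ℝ) - 2) • gradient u y) x ≤ 0)
      ↔ (α ≤ 0 ∨ 1 ≤ α) := by
  have hn2 : (2:ℝ) ≤ (n:ℝ) := by exact_mod_cast hn
  set m : ℝ := (n:ℝ) - 2 with hm_def
  set β : ℝ := (α - 1) * ((n:ℝ) - 1) with hβ_def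
  set C : ℝ := |α| ^ m * α with hC_def
  set H : ℝ → ℝ := fun t => C * ((1/2) * Real.log t) ^ β * t ^ (-(n:ℝ)/2) with hH_def
  -- the key computation
  have key : ∀ x : EuclideanSpace ℝ (Fin n), 1 < ‖x‖ →
      vdiv n (fun y => ‖gradient u y‖ ^ ((n : ℝ) - 2) • gradient u y) x
        = C * β * ((1/2) * Real.log (‖x‖^2)) ^ (β - 1) * (‖x‖^2) ^ (-(n:ℝ)/2) := by
    intro x hx
    have hx0 : 0 < ‖x‖ := lt_trans one_pos hx
    have hs0 : (0:ℝ) < ‖x‖^2 := by positivity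
    have hs1 : (1:ℝ) < ‖x‖^2 := by nlinarith
    have hL : (0:ℝ) < (1/2) * Real.log (‖x‖^2) := by
      have := Real.log_pos hs1; linarith
    set s : ℝ := ‖x‖^2 with hs_def
    set L : ℝ := (1/2) * Real.log s with hL_def
    -- derivative of H
    set D : ℝ := (1/2 * s⁻¹) * β * L ^ (β-1) * s ^ (-(n:ℝ)/2)
        + C * L ^ β * ((-(n:ℝ)/2) * s ^ (-(n:ℝ)/2 - 1)) * 1 with hD_def
    have hH' : HasDerivAt H ((C * ((1/2 * s⁻¹) * β * L ^ (β-1))) * s ^ (-(n:ℝ)/2)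
        + (C * L ^ β) * ((-(n:ℝ)/2) * s ^ (-(n:ℝ)/2 - 1))) s := by
      have h1 : HasDerivAt (fun t : ℝ => ((1/2) * Real.log t) ^ β)
          ((1/2 * s⁻¹) * β * L ^ (β-1)) s :=
        ((Real.hasDerivAt_log hs0.ne').const_mul (1/2)).rpow_const (Or.inl hL.ne')
      have h2 : HasDerivAt (fun t : ℝ => t ^ (-(n:ℝ)/2))
          ((-(n:ℝ)/2) * s ^ (-(n:ℝ)/2 - 1)) s :=
        Real.hasDerivAt_rpow_const (Or.inl hs0.ne')
      exact (h1.const_mul C).mul h2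
    -- F equals the radial field near x
    have hFG : (fun y : EuclideanSpace ℝ (Fin n) =>
          ‖gradient u y‖ ^ ((n : ℝ) - 2) • gradient u y)
        =ᶠ[nhds x] (fun y => H (‖y‖^2) • y) := by
      filter_upwards [(isOpen_lt continuous_const continuous_norm).mem_nhds hx] with y hy
      have hy0 : 0 < ‖y‖ := lt_trans one_pos hy
      have hys1 : (1:ℝ) < ‖y‖^2 := by nlinarith
      have hyL : (0:ℝ) < (1/2) * Real.log (‖y‖^2) := by
        have := Real.log_pos hys1; linarith
      have hg : gradient u y
          = (α * ((1/2) * Real.log (‖y‖^2)) ^ (α-1) * (‖y‖^2)⁻¹) • y := by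
        rw [hu]; exact (grad_u n α y hy).gradient
      rw [hg, norm_smul, Real.norm_eq_abs, smul_smul]
      congr 1
      have := aux1 m α ((1/2) * Real.log (‖y‖^2)) ‖y‖ hyL hy0
      rw [hm_def] at this
      rw [show ((n:ℝ) - 2 : ℝ) = m from rfl, hm_def, this]
      simp only [hH_def, hC_def, hm_def]
      congr 2
      · rw [hβ_def]; ring
      · ring
    have hvd : vdiv n (fun y : EuclideanSpace ℝ (Fin n) =>
          ‖gradient u y‖ ^ ((n : ℝ) - 2) • gradient u y) x
        = vdiv n (fun y => H (‖y‖^2) • y) x := by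
      unfold vdiv
      rw [hFG.fderiv_eq]
    rw [hvd, vdiv_radial n H _ x hH']
    have hHs : H s = C * L ^ β * s ^ (-(n:ℝ)/2) := rfl
    rw [hHs]
    -- now pure algebra
    have hLpow : L ^ β = L ^ (β - 1) * L := by
      rw [← Real.rpow_add_one hL.ne' (β - 1)]
      congr 1
      ring
    have hspow : s ^ (-(n:ℝ)/2 - 1) = s ^ (-(n:ℝ)/2) * s⁻¹ := by
      rw [← Real.rpow_neg_one s, ← Real.rpow_add hs0]
      congr 1 <;> ring
    rw [hspow, hLpow]
    have hβval : β = (α - 1) * ((n:ℝ) - 1) := hβ_def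
    field_simp
    ring
  constructor
  · intro h
    by_contra hc
    push_neg at hc
    obtain ⟨hα0, hα1⟩ := hc
    -- test point with norm e
    have hnpos : 0 < n := by omega
    set x₀ : EuclideanSpace ℝ (Fin n) :=
      EuclideanSpace.single (⟨0, hnpos⟩ : Fin n) (Real.exp 1) with hx₀
    have hnx₀ : ‖x₀‖ = Real.exp 1 := by
      rw [hx₀, EuclideanSpace.norm_single, Real.norm_eq_abs,
        abs_of_pos (Real.exp_pos 1)]
    have hexp1 : (1:ℝ) < Real.exp 1 := by
      have := Real.add_one_lt_exp (by norm_num : (1:ℝ) ≠ 0); linarith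
    have hx₀1 : 1 < ‖x₀‖ := by rw [hnx₀]; exact hexp1
    have := h x₀ hx₀1
    rw [key x₀ hx₀1] at this
    have hlog : (1/2 : ℝ) * Real.log (‖x₀‖^2) = 1 := by
      rw [hnx₀, Real.log_pow, Real.log_exp]
      norm_num
    rw [hlog, Real.one_rpow] at this
    have hP : (0:ℝ) < (‖x₀‖^2) ^ (-(n:ℝ)/2) :=
      Real.rpow_pos_of_pos (by positivity) _
    have hCβ : C * β < 0 := by
      have hαm : (0:ℝ) < |α| ^ m := Real.rpow_pos_of_pos (abs_pos.mpr (ne_of_gt hα0)) _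
      have h1 : C > 0 := mul_pos hαm hα0
      have h2 : β < 0 := mul_neg_of_neg_of_pos (by linarith) (by linarith)
      exact mul_neg_of_pos_of_neg h1 h2
    nlinarith
  · intro hα x hx
    rw [key x hx]
    have hx0 : 0 < ‖x‖ := lt_trans one_pos hx
    have hs1 : (1:ℝ) < ‖x‖^2 := by nlinarith
    have hL : (0:ℝ) < (1/2) * Real.log (‖x‖^2) := by
      have := Real.log_pos hs1; linarith
    have hP : (0:ℝ) ≤ (‖x‖^2) ^ (-(n:ℝ)/2) := Real.rpow_nonneg (by positivity) _
    have hLp : (0:ℝ) ≤ ((1/2) * Real.log (‖x‖^2)) ^ (β - 1) := Real.rpow_nonneg hL.le _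
    have hαm : (0:ℝ) ≤ |α| ^ m := Real.rpow_nonneg (abs_nonneg _) _
    have hCβ : 0 ≤ C * β := by
      rw [hC_def, hβ_def]
      have : 0 ≤ α * (α - 1) := by
        rcases hα with h | h
        · nlinarith
        · nlinarith
      have hn1 : (0:ℝ) ≤ (n:ℝ) - 1 := by linarith
      nlinarith [mul_nonneg (mul_nonneg hαm this) hn1]
    have : 0 ≤ C * β * ((1/2) * Real.log (‖x‖^2)) ^ (β - 1) * (‖x‖^2) ^ (-(n:ℝ)/2) :=
      mul_nonneg (mul_nonneg hCβ hLp) hP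
    linarith
end

section
/- For every real Q > 1 and integer n ≥ 2, there exist exactly two exponents α' and α with 1 - 1/n < α' < 1 < α such that Q = α^n/(nα - n + 1) = (α')^n/(n α' - n + 1). -/
open Set

theorem exactly_two_exponents (n : ℕ) (hn : 2 ≤ n) (Q : ℝ) (hQ : 1 < Q) :
    (∃! α' : ℝ, α' ∈ Ioo (1 - 1 / (n : ℝ)) 1 ∧ Q = α' ^ n / (n * α' - n + 1)) ∧
    (∃! α : ℝ, 1 < α ∧ Q = α ^ n / (n * α - n + 1)) := by
  have hn2 : (2:ℝ) ≤ n := by exact_mod_cast hn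
  have hn0 : (0:ℝ) < n := by linarith
  set a0 : ℝ := 1 - 1/n with ha0
  clear_value a0
  have hinv : 1/(n:ℝ) ≤ 1/2 := by
    apply one_div_le_one_div_of_le <;> linarith
  have hinvpos : 0 < 1/(n:ℝ) := by positivity
  have ha0half : (1:ℝ)/2 ≤ a0 := by rw [ha0]; linarith
  have ha0lt1 : a0 < 1 := by rw [ha0]; linarith
  set g : ℝ → ℝ := fun α => α ^ n - Q * (n * α - n + 1) with hg
  clear_value g
  have hd : ∀ α : ℝ, a0 < α → 0 < (n:ℝ) * α - n + 1 := by
    intro α hα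
    have h1 : (n:ℝ) * a0 < n * α := by
      exact mul_lt_mul_of_pos_left hα hn0
    have h2 : (n:ℝ) * a0 = n - 1 := by
      rw [ha0]; field_simp
    linarith
  have key : ∀ α : ℝ, a0 < α → (Q = α ^ n / (n * α - n + 1) ↔ g α = 0) := by
    intro α hα
    have hdα := hd α hα
    rw [eq_div_iff (ne_of_gt hdα)]
    constructor <;> intro h <;> simp only [hg] at * <;> linarith
  have hgc : Continuous g := by
    simp only [hg]; fun_prop
  have hga0 : 0 < g a0 := by
    have h2 : (n:ℝ) * a0 = n - 1 := by rw [ha0]; field_simp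
    have : g a0 = a0 ^ n := by simp only [hg]; rw [h2]; ring
    rw [this]
    positivity -- a0 > 0? need a0 ≥ 1/2 > 0
  have hg1 : g 1 = 1 - Q := by simp [hg]
  have hg1neg : g 1 < 0 := by rw [hg1]; linarith
  -- derivative
  have hder : ∀ x : ℝ, HasDerivAt g ((n:ℝ) * x^(n-1) - Q * n) x := by
    intro x
    have h1 : HasDerivAt (fun α : ℝ => α ^ n) ((n:ℝ) * x^(n-1)) x := hasDerivAt_pow n x
    have h2 : HasDerivAt (fun α : ℝ => Q * ((n:ℝ) * α - n + 1)) (Q * ((n:ℝ) * 1)) x := by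
      have h3 : HasDerivAt (fun α : ℝ => (n:ℝ) * α) ((n:ℝ) * 1) x :=
        (hasDerivAt_id x).const_mul (n:ℝ)
      have h4 := (h3.sub_const ((n:ℝ))).add_const 1
      exact h4.const_mul Q
    have := h1.sub h2
    simpa [hg, mul_one, Pi.sub_def] using this
  -- strict anti on [a0, 1]
  have hanti : StrictAntiOn g (Icc a0 1) := by
    apply strictAntiOn_of_deriv_neg (convex_Icc a0 1) hgc.continuousOn
    intro x hx
    rw [interior_Icc] at hx
    rw [(hder x).deriv]
    have ha0pos : (0:ℝ) < a0 := by linarith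
    have hx0 : (0:ℝ) < x := lt_of_lt_of_le ha0pos (le_of_lt hx.1)
    have hxp : x ^ (n-1) ≤ 1 := pow_le_one₀ (le_of_lt hx0) (le_of_lt hx.2)
    nlinarith
  -- existence on the left
  obtain ⟨c, hc, hgc0⟩ : ∃ c ∈ Ioo a0 1, g c = 0 := by
    have h := intermediate_value_Ioo' (le_of_lt ha0lt1) hgc.continuousOn
      (a := a0) (b := 1)
    have h0 : (0:ℝ) ∈ Ioo (g 1) (g a0) := ⟨hg1neg, hga0⟩
    obtain ⟨c, hc, hc0⟩ := h h0
    exact ⟨c, hc, hc0⟩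
  -- existence on the right
  have hb1 : (1:ℝ) < Q * n + 1 := by nlinarith
  have hgb : 0 < g (Q * n + 1) := by
    set b : ℝ := Q * n + 1 with hb
    have hbn : b ^ 2 ≤ b ^ n := pow_le_pow_right₀ (le_of_lt hb1) hn
    simp only [hg]
    nlinarith [sq_nonneg b, sq_nonneg (Q*n)]
  obtain ⟨r, hr, hgr0⟩ : ∃ r ∈ Ioo 1 (Q * n + 1), g r = 0 := by
    have h := intermediate_value_Ioo (le_of_lt hb1) hgc.continuousOn
      (a := 1) (b := Q * n + 1)
    obtain ⟨r, hr, hr0⟩ := h ⟨hg1neg, hgb⟩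
    exact ⟨r, hr, hr0⟩
  -- strict convexity
  have hconv : StrictConvexOn ℝ (Ici (0:ℝ)) g := by
    have hpow : StrictConvexOn ℝ (Ici (0:ℝ)) (fun x : ℝ => x ^ n) :=
      strictConvexOn_pow hn
    have haff : ConcaveOn ℝ (Ici (0:ℝ)) (fun α : ℝ => Q * ((n:ℝ) * α - n + 1)) := by
      constructor
      · exact convex_Ici 0
      · intro x _ y _ a b ha hb hab
        simp only [smul_eq_mul]
        nlinarith [hab]
    have h := hpow.sub_concaveOn haff
    have : g = (fun x : ℝ => x ^ n) - fun α : ℝ => Q * ((n:ℝ) * α - n + 1) := by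
      funext x; simp [hg]
    rw [this]
    exact h
  -- no three zeros
  have three : ∀ p q r : ℝ, 0 < p → p < q → q < r → g p = 0 → g q = 0 → g r = 0 → False := by
    intro p q r hp hpq hqr hgp hgq hgr
    have hrp : 0 < r - p := by linarith
    have hrp' : r - p ≠ 0 := ne_of_gt hrp
    have ht0 : 0 < (r - q)/(r - p) := by apply div_pos <;> linarith
    have ht1 : (r - q)/(r - p) < 1 := by rw [div_lt_one hrp]; linarith
    have hb0 : 0 < 1 - (r - q)/(r - p) := by linarith
    have hab : (r - q)/(r - p) + (1 - (r - q)/(r - p)) = 1 := by ring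
    have hq : ((r - q)/(r - p)) • p + (1 - (r - q)/(r - p)) • r = q := by
      simp only [smul_eq_mul]
      field_simp
      ring
    have hpr : p ≠ r := by intro h; rw [h] at hpq; linarith
    have := hconv.2 (le_of_lt hp : (0:ℝ) ≤ p) (by linarith : (0:ℝ) ≤ r)
      hpr ht0 hb0 hab
    rw [hq, hgp, hgq, hgr] at this
    simp at this
  constructor
  · refine ⟨c, ⟨hc, (key c hc.1).mpr hgc0⟩, ?_⟩
    intro y ⟨hy, hQy⟩
    have hgy : g y = 0 := (key y hy.1).mp hQy
    have hyI : y ∈ Icc a0 1 := ⟨le_of_lt hy.1, le_of_lt hy.2⟩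
    have hcI : c ∈ Icc a0 1 := ⟨le_of_lt hc.1, le_of_lt hc.2⟩
    exact hanti.injOn hyI hcI (by rw [hgy, hgc0])
  · refine ⟨r, ⟨hr.1, (key r (lt_trans ha0lt1 hr.1)).mpr hgr0⟩, ?_⟩
    intro y ⟨hy, hQy⟩
    have hgy : g y = 0 := (key y (lt_trans ha0lt1 hy)).mp hQy
    have ha0pos : (0:ℝ) < a0 := by linarith
    have hc0 : (0:ℝ) < c := lt_of_lt_of_le ha0pos (le_of_lt hc.1)
    rcases lt_trichotomy y r with h | h | h
    · exact absurd (three c y r hc0 (lt_trans hc.2 hy) h hgc0 hgy hgr0) id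
    · exact h
    · exact absurd (three c r y hc0 (lt_trans hc.2 hr.1) h hgc0 hgr0 hgy) id
end

section
/- Let n ≥ 2, α > 1 - 1/n, and S > 1. Define k(S) = Q_{α,n} · ((S^{nα-n+1} - 1)/(S - 1)) · ((S - 1)/(S^α - 1))^n with Q_{α,n} = α^n/(nα-n+1). Then k(S) ≤ Q_{α,n} for all S > 1 and k(S) → Q_{α,n} as S → ∞. -/
open Real Filter Set

lemma concave_aux (u : ℝ) (hu : 0 < u) :
    ConcaveOn ℝ (Set.Ioi 0) (fun γ : ℝ => Real.log (Real.exp (γ * u) - 1)) := by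
  have hderiv : ∀ γ ∈ Set.Ioi (0:ℝ),
      HasDerivAt (fun γ : ℝ => Real.log (Real.exp (γ * u) - 1))
        (Real.exp (γ * u) * u / (Real.exp (γ * u) - 1)) γ := by
    intro γ hγ
    have h1 : HasDerivAt (fun γ : ℝ => γ * u) u γ := by
      simpa using (hasDerivAt_id γ).mul_const u
    have h2 : HasDerivAt (fun γ : ℝ => Real.exp (γ * u)) (Real.exp (γ * u) * u) γ :=
      (Real.hasDerivAt_exp _).comp γ h1
    have h3 : Real.exp (γ * u) - 1 ≠ 0 := by
      have : (1:ℝ) < Real.exp (γ * u) := by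
        rw [show (1:ℝ) = Real.exp 0 by simp]
        exact Real.exp_lt_exp.2 (mul_pos hγ hu)
      linarith
    exact (h2.sub_const 1).log h3
  have hderiveq : ∀ γ ∈ interior (Set.Ioi (0:ℝ)),
      deriv (fun γ : ℝ => Real.log (Real.exp (γ * u) - 1)) γ
        = Real.exp (γ * u) * u / (Real.exp (γ * u) - 1) := by
    rw [interior_Ioi]
    exact fun γ hγ => (hderiv γ hγ).deriv
  apply AntitoneOn.concaveOn_of_deriv (convex_Ioi 0)
  · exact fun γ hγ => (hderiv γ hγ).continuousAt.continuousWithinAt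
  · rw [interior_Ioi]
    exact fun γ hγ => (hderiv γ hγ).differentiableAt.differentiableWithinAt
  · rw [interior_Ioi] at hderiveq ⊢
    intro x hx y hy hxy
    rw [hderiveq x hx, hderiveq y hy]
    have hex : (1:ℝ) < Real.exp (x * u) := by
      rw [show (1:ℝ) = Real.exp 0 by simp]
      exact Real.exp_lt_exp.2 (mul_pos hx hu)
    have hey : (1:ℝ) < Real.exp (y * u) := by
      rw [show (1:ℝ) = Real.exp 0 by simp]
      exact Real.exp_lt_exp.2 (mul_pos hy hu)
    have hxy' : Real.exp (x * u) ≤ Real.exp (y * u) :=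
      Real.exp_le_exp.2 (by nlinarith [le_of_lt (show (0:ℝ) < x from hx)])
    rw [div_le_div_iff₀ (by linarith) (by linarith)]
    nlinarith

lemma key_ineq (n : ℕ) (hn : 2 ≤ n) (α β : ℝ) (hα : 0 < α) (hβ : 0 < β)
    (hrel : (n:ℝ) * α = β + ((n:ℝ) - 1)) (S : ℝ) (hS : 1 < S) :
    (S ^ β - 1) * (S - 1) ^ (n - 1) ≤ (S ^ α - 1) ^ n := by
  have hSpos : (0:ℝ) < S := by linarith
  set u := Real.log S with hu
  have hupos : 0 < u := Real.log_pos hS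
  have hconc := concave_aux u hupos
  have hnpos : (0:ℝ) < n := by positivity
  have hab : (1:ℝ)/n + ((n:ℝ)-1)/n = 1 := by field_simp; ring
  have hmem1 : (1:ℝ) ∈ Set.Ioi (0:ℝ) := by norm_num
  have hmemβ : β ∈ Set.Ioi (0:ℝ) := hβ
  have := hconc.2 hmemβ hmem1 (by positivity : (0:ℝ) ≤ 1/n)
    (by
      have h1 : (1:ℝ) ≤ n := by exact_mod_cast (le_trans one_le_two hn)
      have : (0:ℝ) ≤ (n:ℝ) - 1 := by linarith
      positivity) hab
  -- this : (1/n) • f β + ((n-1)/n) • f 1 ≤ f ((1/n) • β + ((n-1)/n) • 1)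
  have hcomb : (1/(n:ℝ)) • β + (((n:ℝ)-1)/n) • (1:ℝ) = α := by
    have hne : (n:ℝ) ≠ 0 := ne_of_gt hnpos
    simp only [smul_eq_mul, mul_one]
    field_simp
    linarith [hrel]
  rw [hcomb] at this
  simp only [smul_eq_mul] at this
  -- multiply by n
  have hmul : Real.log (Real.exp (β * u) - 1) + ((n:ℝ)-1) * Real.log (Real.exp (1 * u) - 1)
      ≤ (n:ℝ) * Real.log (Real.exp (α * u) - 1) := by
    have h2 := mul_le_mul_of_nonneg_left this hnpos.le
    calc Real.log (Real.exp (β * u) - 1) + ((n:ℝ)-1) * Real.log (Real.exp (1 * u) - 1)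
        = (n:ℝ) * (1/(n:ℝ) * Real.log (Real.exp (β * u) - 1)
          + ((n:ℝ)-1)/n * Real.log (Real.exp (1 * u) - 1)) := by field_simp
      _ ≤ (n:ℝ) * Real.log (Real.exp (α * u) - 1) := h2
  -- rewrite exp (γ * u) as S ^ γ
  have hrw : ∀ γ : ℝ, Real.exp (γ * u) = S ^ γ := by
    intro γ
    rw [Real.rpow_def_of_pos hSpos, mul_comm]
  rw [hrw, hrw, hrw, Real.rpow_one] at hmul
  have hS1 : 0 < S ^ β - 1 := by
    have : 1 < S ^ β := (Real.one_lt_rpow_iff_of_pos hSpos).2 (Or.inl ⟨hS, hβ⟩)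
    linarith
  have hS2 : 0 < S - 1 := by linarith
  have hS3 : 0 < S ^ α - 1 := by
    have : 1 < S ^ α := (Real.one_lt_rpow_iff_of_pos hSpos).2 (Or.inl ⟨hS, hα⟩)
    linarith
  have hexp := Real.exp_le_exp.2 hmul
  rw [Real.exp_add, Real.exp_log hS1] at hexp
  have hn1 : ((n:ℝ) - 1) = ((n - 1 : ℕ) : ℝ) := by
    have : (1:ℕ) ≤ n := le_trans one_le_two hn
    push_cast [Nat.cast_sub this]
    ring
  rw [hn1, Real.exp_nat_mul, Real.exp_log hS2] at hexp
  have hn2 : ((n:ℕ):ℝ) * Real.log (S ^ α - 1) = ((n:ℕ):ℝ) * Real.log (S ^ α - 1) := rfl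
  rwa [Real.exp_nat_mul, Real.exp_log hS3] at hexp
theorem energy_quotient_bounded_and_limit (n : ℕ) (hn : 2 ≤ n)
    (α : ℝ) (hα : 1 - 1 / (n : ℝ) < α)
    (k : ℝ → ℝ)
    (hk : k = fun S : ℝ => α ^ n / (n * α - n + 1)
        * ((S ^ (n * α - n + 1) - 1) / (S - 1)) * ((S - 1) / (S ^ α - 1)) ^ n) :
    (∀ S : ℝ, 1 < S → k S ≤ α ^ n / (n * α - n + 1)) ∧
    Tendsto k atTop (nhds (α ^ n / (n * α - n + 1))) := by
  have hnpos : (0:ℝ) < n := by positivity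
  have hn2 : (2:ℝ) ≤ n := by exact_mod_cast hn
  have hinv : 1 / (n:ℝ) ≤ 1/2 := by
    apply one_div_le_one_div_of_le <;> linarith
  have hαpos : 0 < α := by linarith
  set β : ℝ := (n:ℝ) * α - n + 1 with hβdef
  have hβpos : 0 < β := by
    have : (n:ℝ) * (1 - 1/n) < (n:ℝ) * α := by
      exact (mul_lt_mul_iff_right₀ hnpos).2 hα
    have h2 : (n:ℝ) * (1 - 1/n) = n - 1 := by field_simp
    rw [h2] at this
    simp only [hβdef]; linarith
  have hrel : (n:ℝ) * α = β + ((n:ℝ) - 1) := by simp only [hβdef]; ring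
  set Q : ℝ := α ^ n / β with hQdef
  have hQpos : 0 < Q := by positivity
  constructor
  · intro S hS
    have hSpos : (0:ℝ) < S := by linarith
    have hS2 : 0 < S - 1 := by linarith
    have hSb : 0 < S ^ β - 1 := by
      have : 1 < S ^ β := (Real.one_lt_rpow_iff_of_pos hSpos).2 (Or.inl ⟨hS, hβpos⟩)
      linarith
    have hSa : 0 < S ^ α - 1 := by
      have : 1 < S ^ α := (Real.one_lt_rpow_iff_of_pos hSpos).2 (Or.inl ⟨hS, hαpos⟩)
      linarith
    have hkey := key_ineq n hn α β hαpos hβpos hrel S hS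
    rw [hk]
    show Q * ((S ^ β - 1) / (S - 1)) * ((S - 1) / (S ^ α - 1)) ^ n ≤ Q
    rw [mul_assoc]
    apply mul_le_of_le_one_right hQpos.le
    have hn1 : n - 1 + 1 = n := by omega
    have hp : (S - 1) ^ n = (S - 1) * (S - 1) ^ (n - 1) := by
      conv_lhs => rw [← hn1]
      rw [pow_succ]; ring
    have heq : (S ^ β - 1) / (S - 1) * ((S - 1) / (S ^ α - 1)) ^ n
        = (S ^ β - 1) * (S - 1) ^ (n-1) / (S ^ α - 1) ^ n := by
      rw [div_pow, div_mul_div_comm, hp]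
      rw [mul_comm (S - 1) ((S - 1) ^ (n - 1)), ← mul_assoc, mul_div_assoc]
      congr 1
      rw [mul_comm (S - 1) ((S ^ α - 1) ^ n), ← div_div, div_right_comm,
        div_self (ne_of_gt hS2), one_div]
    rw [heq, div_le_one (by positivity)]
    exact hkey
  · have hb : Tendsto (fun S : ℝ => (S ^ β)⁻¹) atTop (nhds 0) :=
      (tendsto_rpow_atTop hβpos).inv_tendsto_atTop
    have ha : Tendsto (fun S : ℝ => (S ^ α)⁻¹) atTop (nhds 0) :=
      (tendsto_rpow_atTop hαpos).inv_tendsto_atTop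
    have hs : Tendsto (fun S : ℝ => S⁻¹) atTop (nhds (0:ℝ)) := tendsto_inv_atTop_zero
    have hg : Tendsto (fun S : ℝ => Q * ((1 - (S ^ β)⁻¹)
        * ((1 - S⁻¹) / (1 - (S ^ α)⁻¹)) ^ n / (1 - S⁻¹))) atTop
        (nhds (Q * ((1 - 0) * ((1 - 0) / (1 - 0)) ^ n / (1 - 0)))) := by
      apply Tendsto.const_mul
      apply Tendsto.div
      · exact (tendsto_const_nhds.sub hb).mul
          (((tendsto_const_nhds.sub hs).div (tendsto_const_nhds.sub ha) (by norm_num)).pow n)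
      · exact tendsto_const_nhds.sub hs
      · norm_num
    simp only [sub_zero, div_one, one_pow, mul_one] at hg
    apply hg.congr'
    filter_upwards [eventually_gt_atTop (1:ℝ)] with S hS
    have hSpos : (0:ℝ) < S := by linarith
    have hS2 : 0 < S - 1 := by linarith
    have hb1 : 1 < S ^ β := (Real.one_lt_rpow_iff_of_pos hSpos).2 (Or.inl ⟨hS, hβpos⟩)
    have ha1 : 1 < S ^ α := (Real.one_lt_rpow_iff_of_pos hSpos).2 (Or.inl ⟨hS, hαpos⟩)
    have hbne : S ^ β ≠ 0 := by positivity
    have hane : S ^ α ≠ 0 := by positivity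
    have hSne : S ≠ 0 := ne_of_gt hSpos
    have ha1' : S ^ α - 1 ≠ 0 := by linarith
    have hb1' : S ^ β - 1 ≠ 0 := by linarith
    have hS2' : S - 1 ≠ 0 := ne_of_gt hS2
    have k1 : S ^ (α * n + 1) = (S ^ α) ^ n * S := by
      rw [Real.rpow_add hSpos, Real.rpow_one, Real.rpow_mul hSpos.le, Real.rpow_natCast]
    have k2 : S ^ (β + n) = S ^ β * (S:ℝ) ^ (n:ℕ) := by
      rw [Real.rpow_add hSpos, Real.rpow_natCast]
    have key : (S ^ α) ^ n * S = S ^ β * (S:ℝ) ^ (n:ℕ) := by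
      rw [← k1, ← k2]
      congr 1
      simp only [hβdef]; ring
    rw [hk]
    show Q * ((1 - (S ^ β)⁻¹) * ((1 - S⁻¹) / (1 - (S ^ α)⁻¹)) ^ n / (1 - S⁻¹))
      = Q * ((S ^ β - 1) / (S - 1)) * ((S - 1) / (S ^ α - 1)) ^ n
    have e1 : 1 - (S ^ β)⁻¹ = (S ^ β - 1) / S ^ β := by field_simp
    have e2 : (1 - S⁻¹) / (1 - (S ^ α)⁻¹)
        = (S - 1) / (S ^ α - 1) * (S ^ α / S) := by
      field_simp
    have e3 : 1 - S⁻¹ = (S - 1) / S := by field_simp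
    have hBne : (S:ℝ) ^ (n:ℕ) ≠ 0 := pow_ne_zero _ hSne
    have hone : (S ^ α) ^ n * S / (S ^ β * (S:ℝ) ^ (n:ℕ)) = 1 := by
      rw [key]; exact div_self (mul_ne_zero hbne hBne)
    have hmain : Q * ((1 - (S ^ β)⁻¹) * ((1 - S⁻¹) / (1 - (S ^ α)⁻¹)) ^ n / (1 - S⁻¹))
        = Q * ((S ^ β - 1) / (S - 1)) * ((S - 1) / (S ^ α - 1)) ^ n
          * ((S ^ α) ^ n * S / (S ^ β * (S:ℝ) ^ (n:ℕ))) := by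
      rw [e1, e2, e3, mul_pow, div_pow, div_pow]
      field_simp
    rw [hmain, hone, mul_one]
end

section
/- Let n ≥ 2, α > 1 - 1/n, and define k(S) = Q_{α,n} ((S^{nα-n+1}-1)/(S-1))((S-1)/(S^α-1))^n for S > 1, where Q_{α,n} = α^n/(nα-n+1). Then k(S) ≥ k(√S) for every S > 1. -/
open Real

-- superadditivity of weighted geometric mean (two-point Hölder)
lemma gm_superadd (u v w : ℝ) (hu : 0 ≤ u) (hv : 0 ≤ v) (hw0 : 0 ≤ w) (hw1 : w ≤ 1) :
    1 + u ^ w * v ^ (1 - w) ≤ (1 + u) ^ w * (1 + v) ^ (1 - w) := by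
  have hA : (0:ℝ) < 1 + u := by linarith
  have hB : (0:ℝ) < 1 + v := by linarith
  have hw1' : (0:ℝ) ≤ 1 - w := by linarith
  have h1 : (1/(1+u)) ^ w * (1/(1+v)) ^ (1 - w) ≤ w * (1/(1+u)) + (1-w) * (1/(1+v)) :=
    Real.geom_mean_le_arith_mean2_weighted hw0 hw1' (by positivity) (by positivity) (by ring)
  have h2 : (u/(1+u)) ^ w * (v/(1+v)) ^ (1 - w) ≤ w * (u/(1+u)) + (1-w) * (v/(1+v)) :=
    Real.geom_mean_le_arith_mean2_weighted hw0 hw1' (by positivity) (by positivity) (by ring)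
  have hsum : (1/(1+u)) ^ w * (1/(1+v)) ^ (1 - w)
      + (u/(1+u)) ^ w * (v/(1+v)) ^ (1 - w) ≤ 1 := by
    have he : w * (1/(1+u)) + (1-w) * (1/(1+v)) + (w * (u/(1+u)) + (1-w) * (v/(1+v))) = 1 := by
      field_simp
      ring
    linarith
  rw [Real.div_rpow (by norm_num) hA.le, Real.div_rpow (by norm_num) hB.le,
      Real.div_rpow hu hA.le, Real.div_rpow hv hB.le, Real.one_rpow, Real.one_rpow] at hsum
  have hAw : 0 < (1+u) ^ w := Real.rpow_pos_of_pos hA w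
  have hBw : 0 < (1+v) ^ (1-w) := Real.rpow_pos_of_pos hB (1-w)
  have hmul := mul_le_mul_of_nonneg_left hsum (le_of_lt (mul_pos hAw hBw))
  calc 1 + u ^ w * v ^ (1 - w)
      = ((1+u)^w * (1+v)^(1-w)) *
        (1/(1+u)^w * (1/(1+v)^(1-w)) + u^w/(1+u)^w * (v^(1-w)/(1+v)^(1-w))) := by
        field_simp
    _ ≤ ((1+u)^w * (1+v)^(1-w)) * 1 := hmul
    _ = (1+u)^w * (1+v)^(1-w) := mul_one _

lemma holder_pow (n : ℕ) (hn : 1 ≤ n) (a b c : ℝ) (ha : 0 ≤ a) (hb : 0 ≤ b)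
    (hc : c = a ^ ((1:ℝ)/n) * b ^ (1 - (1:ℝ)/n)) :
    (1 + c) ^ n ≤ (1 + a) * (1 + b) ^ (n - 1) := by
  have hnpos : 0 < n := hn
  have hn0 : (n:ℝ) ≠ 0 := Nat.cast_ne_zero.2 (by omega)
  have hnR : (0:ℝ) < n := by exact_mod_cast hnpos
  have hw0 : (0:ℝ) ≤ 1/n := by positivity
  have hw1 : (1:ℝ)/n ≤ 1 := by
    rw [div_le_one hnR]; exact_mod_cast hn
  have key : 1 + c ≤ (1 + a) ^ ((1:ℝ)/n) * (1 + b) ^ (1 - (1:ℝ)/n) := by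
    rw [hc]; exact gm_superadd a b _ ha hb hw0 hw1
  have h1c : 0 ≤ 1 + c := by rw [hc]; positivity
  have hpow := pow_le_pow_left₀ h1c key n
  have e1 : (1/(n:ℝ)) * n = 1 := by field_simp
  have e2 : (1 - 1/(n:ℝ)) * n = ((n-1 : ℕ) : ℝ) := by
    rw [Nat.cast_sub hn]; push_cast; field_simp
  calc (1+c)^n ≤ ((1 + a) ^ ((1:ℝ)/n) * (1 + b) ^ (1 - (1:ℝ)/n))^n := hpow
    _ = (1+a) * (1+b)^(n-1) := by
        rw [mul_pow, ← Real.rpow_natCast ((1+a)^((1:ℝ)/n)) n,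
            ← Real.rpow_natCast ((1+b)^(1-(1:ℝ)/n)) n,
            ← Real.rpow_mul (by linarith : (0:ℝ) ≤ 1+a),
            ← Real.rpow_mul (by linarith : (0:ℝ) ≤ 1+b), e1, e2,
            Real.rpow_one, Real.rpow_natCast]

lemma key_eq (m : ℕ) (Q a b c : ℝ) (hb1 : b - 1 ≠ 0) (hc1 : c - 1 ≠ 0)
    (hb2 : 1 + b ≠ 0) (hc2 : 1 + c ≠ 0) :
    Q * ((a*a - 1)/(b*b - 1)) * ((b*b - 1)/(c*c - 1))^(m+2)
      = Q * ((a - 1)/(b - 1)) * ((b - 1)/(c - 1))^(m+2)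
        * ((1+a) * (1+b)^(m+2-1) / (1+c)^(m+2)) := by
  rw [show m + 2 - 1 = m + 1 by omega]
  rw [show a*a - 1 = (a - 1)*(1+a) from by ring, show b*b - 1 = (b - 1)*(1+b) from by ring,
      show c*c - 1 = (c - 1)*(1+c) from by ring]
  simp only [div_pow, mul_pow]
  field_simp
  ring

theorem energy_quotient_sqrt_ineq (n : ℕ) (hn : 2 ≤ n)
    (α : ℝ) (hα : 1 - 1 / (n : ℝ) < α)
    (k : ℝ → ℝ)
    (hk : k = fun S : ℝ => α ^ n / (n * α - n + 1)
        * ((S ^ (n * α - n + 1) - 1) / (S - 1)) * ((S - 1) / (S ^ α - 1)) ^ n)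
    (S : ℝ) (hS : 1 < S) :
    k (Real.sqrt S) ≤ k S := by
  obtain ⟨m, rfl⟩ : ∃ m, n = m + 2 := ⟨n - 2, by omega⟩
  subst hk
  dsimp only
  have hnR : (0:ℝ) < (m + 2 : ℕ) := by positivity
  have hn0 : ((m + 2 : ℕ) : ℝ) ≠ 0 := ne_of_gt hnR
  have hα0 : 0 < α := by
    have h2 : (1:ℝ)/((m+2:ℕ):ℝ) ≤ 1/2 := by
      apply div_le_div_of_nonneg_left (by norm_num) (by norm_num)
      exact_mod_cast by omega
    linarith
  have hβ : 0 < ((m+2:ℕ):ℝ) * α - ((m+2:ℕ):ℝ) + 1 := by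
    have := (mul_lt_mul_iff_right₀ hnR).2 hα
    have hne : ((m+2:ℕ):ℝ) * (1 - 1/((m+2:ℕ):ℝ)) = ((m+2:ℕ):ℝ) - 1 := by
      field_simp
    nlinarith
  set T := Real.sqrt S with hT
  have hT1 : 1 < T := by
    rw [hT, show (1:ℝ) = Real.sqrt 1 from (Real.sqrt_one).symm]
    exact Real.sqrt_lt_sqrt (by norm_num) hS
  have hT0 : (0:ℝ) < T := by linarith
  have hTS : T * T = S := Real.mul_self_sqrt (by linarith)
  set β : ℝ := ((m+2:ℕ):ℝ) * α - ((m+2:ℕ):ℝ) + 1 with hβdef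
  set a : ℝ := T ^ β with hadef
  set c : ℝ := T ^ α with hcdef
  have ha1 : 1 < a := Real.one_lt_rpow_iff_of_pos hT0 |>.2 (Or.inl ⟨hT1, hβ⟩)
  have hc1 : 1 < c := Real.one_lt_rpow_iff_of_pos hT0 |>.2 (Or.inl ⟨hT1, hα0⟩)
  have hSa : S ^ β = a * a := by
    rw [← hTS, Real.mul_rpow hT0.le hT0.le]
  have hSc : S ^ α = c * c := by
    rw [← hTS, Real.mul_rpow hT0.le hT0.le]
  have hcab : c = a ^ ((1:ℝ)/((m+2:ℕ):ℝ)) * T ^ (1 - (1:ℝ)/((m+2:ℕ):ℝ)) := by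
    have hm : ((m:ℝ)+2) ≠ 0 := by positivity
    have hexp : β * ((1:ℝ)/((m+2:ℕ):ℝ)) + (1 - (1:ℝ)/((m+2:ℕ):ℝ)) = α := by
      rw [hβdef]; push_cast; field_simp; ring
    rw [hadef, hcdef, ← Real.rpow_mul hT0.le, ← Real.rpow_add hT0, hexp]
  have hkey : (1 + c) ^ (m+2) ≤ (1 + a) * (1 + T) ^ (m+2-1) :=
    holder_pow (m+2) (by omega) a T c (by linarith) (by linarith)
      hcab
  have hQ : 0 < α ^ (m+2) / β := div_pos (pow_pos hα0 _) hβ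
  have hL : 0 < α ^ (m+2) / β * ((a - 1)/(T - 1)) * ((T - 1)/(c - 1))^(m+2) :=
    mul_pos (mul_pos hQ (div_pos (by linarith) (by linarith)))
      (pow_pos (div_pos (by linarith) (by linarith)) _)
  have hR : 1 ≤ (1+a) * (1+T)^(m+2-1) / (1+c)^(m+2) :=
    (one_le_div (pow_pos (by linarith) _)).2 hkey
  have hEq := key_eq m (α ^ (m+2) / β) a T c (by linarith) (by linarith)
      (by linarith) (by linarith)
  calc α ^ (m+2) / β * ((T ^ β - 1)/(T - 1)) * ((T - 1)/(T ^ α - 1))^(m+2)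
      = α ^ (m+2) / β * ((a - 1)/(T - 1)) * ((T - 1)/(c - 1))^(m+2) * 1 := by
        rw [mul_one]
    _ ≤ α ^ (m+2) / β * ((a - 1)/(T - 1)) * ((T - 1)/(c - 1))^(m+2)
        * ((1+a) * (1+T)^(m+2-1) / (1+c)^(m+2)) :=
        mul_le_mul_of_nonneg_left hR hL.le
    _ = α ^ (m+2) / β * ((a*a - 1)/(T*T - 1)) * ((T*T - 1)/(c*c - 1))^(m+2) := hEq.symm
    _ = α ^ (m+2) / β * ((S ^ β - 1)/(S - 1)) * ((S - 1)/(S ^ α - 1))^(m+2) := by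
        rw [hSa, hSc, hTS]
end

section
/- Let 1 - 1/n < α₂ < 1 < α₁. Then there is a unique r₀ ∈ (1/e, 1) satisfying 1 = (-log r₀)^{α₂} + (log(e r₀))^{α₁}. -/
open Real Set

/-- The key reduction: unique `t ∈ (0,1)` with `t^α₂ + (1-t)^α₁ = 1`. -/
lemma unique_t_aux (α₁ α₂ : ℝ) (h0 : 0 < α₂) (h1 : α₂ < 1) (h2 : 1 < α₁) :
    ∃! t : ℝ, t ∈ Ioo (0:ℝ) 1 ∧ t ^ α₂ + (1 - t) ^ α₁ = 1 := by
  have hα₁0 : 0 < α₁ := lt_trans one_pos h2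
  set h : ℝ → ℝ := fun t => t ^ α₂ + (1 - t) ^ α₁ with hh
  -- continuity on any subset of [0,1]
  have hc : ContinuousOn h (Icc (0:ℝ) 1) := by
    apply ContinuousOn.add
    · exact continuousOn_id.rpow_const (fun x _ => Or.inr h0.le)
    · exact (continuousOn_const.sub continuousOn_id).rpow_const (fun x _ => Or.inr hα₁0.le)
  -- values at the endpoints
  have h_zero : h 0 = 1 := by
    simp only [hh]
    rw [Real.zero_rpow h0.ne', sub_zero, Real.one_rpow]
    ring
  have h_one : h 1 = 1 := by
    simp only [hh]
    rw [sub_self, Real.zero_rpow hα₁0.ne', Real.one_rpow]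
    ring
  -- derivative on (0,1)
  set h' : ℝ → ℝ := fun t => α₂ * t ^ (α₂ - 1) - α₁ * (1 - t) ^ (α₁ - 1) with hh'
  have hd : ∀ t ∈ Ioo (0:ℝ) 1, HasDerivAt h (h' t) t := by
    intro t ht
    have h1t : (0:ℝ) < 1 - t := by linarith [ht.2]
    have d1 : HasDerivAt (fun x : ℝ => x ^ α₂) (α₂ * t ^ (α₂ - 1)) t :=
      Real.hasDerivAt_rpow_const (Or.inl ht.1.ne')
    have d0 : HasDerivAt (fun x : ℝ => 1 - x) (-1) t := by
      simpa using (hasDerivAt_id t).const_sub 1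
    have d2 : HasDerivAt (fun x : ℝ => (1 - x) ^ α₁) (-1 * α₁ * (1 - t) ^ (α₁ - 1)) t :=
      d0.rpow_const (Or.inl h1t.ne')
    have : HasDerivAt (fun x : ℝ => x ^ α₂ + (1 - x) ^ α₁)
        (α₂ * t ^ (α₂ - 1) + -1 * α₁ * (1 - t) ^ (α₁ - 1)) t := d1.add d2
    simp only [hh, hh']
    convert this using 1
    ring
  -- Existence via IVT.
  -- Left test point t₁
  set x₁ : ℝ := α₁ ^ (α₂ - 1)⁻¹ with hx₁
  have hx₁0 : 0 < x₁ := Real.rpow_pos_of_pos hα₁0 _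
  have hx₁1 : x₁ < 1 := Real.rpow_lt_one_of_one_lt_of_neg h2 (by
    rw [inv_neg'']
    linarith)
  set t₁ : ℝ := x₁ / 2 with ht₁
  have ht₁0 : 0 < t₁ := by positivity
  have ht₁h : t₁ < 1 / 2 := by simp only [ht₁]; linarith
  have ht₁1 : t₁ < 1 := by linarith
  have hht₁ : 1 < h t₁ := by
    have hb : 1 + α₁ * (-t₁) ≤ (1 + (-t₁)) ^ α₁ :=
      one_add_mul_self_le_rpow_one_add (by linarith) h2.le
    have key : α₁ * t₁ < t₁ ^ α₂ := by
      have e1 : t₁ ^ α₂ = t₁ * t₁ ^ (α₂ - 1) := by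
        rw [← Real.rpow_one_add' ht₁0.le (by linarith)]
        ring_nf
      have e2 : α₁ < t₁ ^ (α₂ - 1) := by
        have hhalf : ((1:ℝ)/2) ^ (α₂ - 1) > 1 :=
          Real.one_lt_rpow_iff_of_pos (by norm_num) |>.mpr
            (Or.inr ⟨by norm_num, by linarith⟩)
        have e3 : t₁ ^ (α₂ - 1) = x₁ ^ (α₂ - 1) * ((1:ℝ)/2) ^ (α₂ - 1) := by
          rw [← Real.mul_rpow hx₁0.le (by norm_num)]
          congr 1
          simp only [ht₁]
          ring
        have e4 : x₁ ^ (α₂ - 1) = α₁ := by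
          rw [hx₁, ← Real.rpow_mul hα₁0.le,
            inv_mul_cancel₀ (by linarith : α₂ - 1 ≠ 0), Real.rpow_one]

        calc α₁ = α₁ * 1 := by ring
        _ < x₁ ^ (α₂ - 1) * ((1:ℝ)/2) ^ (α₂ - 1) := by
              rw [e4]; exact (mul_lt_mul_iff_right₀ hα₁0).mpr hhalf
        _ = t₁ ^ (α₂ - 1) := e3.symm
      calc α₁ * t₁ < t₁ ^ (α₂ - 1) * t₁ := by
            exact (mul_lt_mul_iff_left₀ ht₁0).mpr e2
      _ = t₁ ^ α₂ := by rw [e1]; ring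
    have : 1 - α₁ * t₁ ≤ (1 - t₁) ^ α₁ := by
      calc 1 - α₁ * t₁ = 1 + α₁ * (-t₁) := by ring
      _ ≤ (1 + (-t₁)) ^ α₁ := hb
      _ = (1 - t₁) ^ α₁ := by ring_nf
    simp only [hh]
    linarith
  -- Right test point t₂ = 1 - u₂
  set y₂ : ℝ := α₂ ^ (α₁ - 1)⁻¹ with hy₂
  have hy₂0 : 0 < y₂ := Real.rpow_pos_of_pos h0 _
  have hy₂1 : y₂ < 1 := Real.rpow_lt_one h0.le h1 (by
    rw [inv_pos]; linarith)
  set u₂ : ℝ := y₂ / 2 with hu₂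
  have hu₂0 : 0 < u₂ := by positivity
  have hu₂h : u₂ < 1 / 2 := by simp only [hu₂]; linarith
  set t₂ : ℝ := 1 - u₂ with ht₂def
  have ht₂0 : 1/2 < t₂ := by simp only [ht₂def]; linarith
  have ht₂1 : t₂ < 1 := by simp only [ht₂def]; linarith
  have hht₂ : h t₂ < 1 := by
    have hb : (1 + (-u₂)) ^ α₂ ≤ 1 + α₂ * (-u₂) :=
      rpow_one_add_le_one_add_mul_self (by linarith) h0.le h1.le
    have key : u₂ ^ α₁ < α₂ * u₂ := by
      have e1 : u₂ ^ α₁ = u₂ * u₂ ^ (α₁ - 1) := by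
        rw [← Real.rpow_one_add' hu₂0.le (by linarith)]
        ring_nf
      have e2 : u₂ ^ (α₁ - 1) < α₂ := by
        have hhalf : ((1:ℝ)/2) ^ (α₁ - 1) < 1 :=
          Real.rpow_lt_one (by norm_num) (by norm_num) (by linarith)
        have e3 : u₂ ^ (α₁ - 1) = y₂ ^ (α₁ - 1) * ((1:ℝ)/2) ^ (α₁ - 1) := by
          rw [← Real.mul_rpow hy₂0.le (by norm_num)]
          congr 1
          simp only [hu₂]
          ring
        have e4 : y₂ ^ (α₁ - 1) = α₂ := by
          rw [hy₂, ← Real.rpow_mul h0.le,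
            inv_mul_cancel₀ (by linarith : α₁ - 1 ≠ 0), Real.rpow_one]
        calc u₂ ^ (α₁ - 1) = y₂ ^ (α₁ - 1) * ((1:ℝ)/2) ^ (α₁ - 1) := e3
        _ = α₂ * ((1:ℝ)/2) ^ (α₁ - 1) := by rw [e4]
        _ < α₂ * 1 := (mul_lt_mul_iff_right₀ h0).mpr hhalf
        _ = α₂ := by ring
      calc u₂ ^ α₁ = u₂ ^ (α₁ - 1) * u₂ := by rw [e1]; ring
      _ < α₂ * u₂ := (mul_lt_mul_iff_left₀ hu₂0).mpr e2
    have : t₂ ^ α₂ ≤ 1 - α₂ * u₂ := by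
      calc t₂ ^ α₂ = (1 + (-u₂)) ^ α₂ := by simp only [ht₂def]; ring_nf
      _ ≤ 1 + α₂ * (-u₂) := hb
      _ = 1 - α₂ * u₂ := by ring
    have h1t₂ : (1:ℝ) - t₂ = u₂ := by simp only [ht₂def]; ring
    simp only [hh]
    rw [h1t₂]
    linarith
  have ht₁t₂ : t₁ < t₂ := lt_trans ht₁h ht₂0
  -- IVT
  have hsub : Icc t₁ t₂ ⊆ Icc (0:ℝ) 1 := Icc_subset_Icc ht₁0.le ht₂1.le
  have hivt : (1:ℝ) ∈ h '' (Icc t₁ t₂) := by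
    apply intermediate_value_Icc' ht₁t₂.le (hc.mono hsub)
    exact ⟨hht₂.le, hht₁.le⟩
  obtain ⟨c, hcmem, hceq⟩ := hivt
  have hc0 : 0 < c := lt_of_lt_of_le ht₁0 hcmem.1
  have hc1 : c < 1 := lt_of_le_of_lt hcmem.2 ht₂1
  -- Uniqueness
  refine ⟨c, ⟨⟨hc0, hc1⟩, hceq⟩, ?_⟩
  -- It suffices to show any two solutions coincide.
  have main : ∀ x y : ℝ, x ∈ Ioo (0:ℝ) 1 → y ∈ Ioo (0:ℝ) 1 → h x = 1 → h y = 1 →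
      x < y → False := by
    intro x y hx hy hhx hhy hxy
    -- Rolle three times on h: zeros of h' in (0,x), (x,y), (y,1)
    have rolle : ∀ a b : ℝ, a < b → 0 ≤ a → b ≤ 1 → h a = h b →
        ∃ z ∈ Ioo a b, h' z = 0 := by
      intro a b hab ha hb heq
      apply exists_hasDerivAt_eq_zero hab (hc.mono (Icc_subset_Icc ha hb)) heq
      intro z hz
      exact hd z ⟨lt_of_le_of_lt ha hz.1, lt_of_lt_of_le hz.2 hb⟩
    obtain ⟨c₁, hc₁, hdc₁⟩ := rolle 0 x hx.1 le_rfl hx.2.le (by rw [h_zero, hhx])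
    obtain ⟨c₂, hc₂, hdc₂⟩ := rolle x y hxy hx.1.le hy.2.le (by rw [hhx, hhy])
    obtain ⟨c₃, hc₃, hdc₃⟩ := rolle y 1 hy.2 hy.1.le le_rfl (by rw [h_one, hhy])
    have hc₁01 : c₁ ∈ Ioo (0:ℝ) 1 := ⟨hc₁.1, lt_trans (lt_trans hc₁.2 hxy) hy.2⟩
    have hc₂01 : c₂ ∈ Ioo (0:ℝ) 1 := ⟨lt_trans hx.1 hc₂.1, lt_trans hc₂.2 hy.2⟩
    have hc₃01 : c₃ ∈ Ioo (0:ℝ) 1 := ⟨lt_trans hy.1 hc₃.1, hc₃.2⟩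
    -- the logarithmic function φ
    set φ : ℝ → ℝ := fun t => Real.log α₂ + (α₂ - 1) * Real.log t
      - (Real.log α₁ + (α₁ - 1) * Real.log (1 - t)) with hφ
    have hφzero : ∀ z ∈ Ioo (0:ℝ) 1, h' z = 0 → φ z = 0 := by
      intro z hz hz0
      have h1z : (0:ℝ) < 1 - z := by linarith [hz.2]
      have heq : α₂ * z ^ (α₂ - 1) = α₁ * (1 - z) ^ (α₁ - 1) := by
        have := sub_eq_zero.mp hz0
        simpa [hh'] using this
      have hl := congrArg Real.log heq
      rw [Real.log_mul h0.ne' (Real.rpow_pos_of_pos hz.1 _).ne',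
          Real.log_mul hα₁0.ne' (Real.rpow_pos_of_pos h1z _).ne',
          Real.log_rpow hz.1, Real.log_rpow h1z] at hl
      simp only [hφ]
      linarith
    have hφc₁ := hφzero c₁ hc₁01 hdc₁
    have hφc₂ := hφzero c₂ hc₂01 hdc₂
    have hφc₃ := hφzero c₃ hc₃01 hdc₃
    -- derivative of φ
    set φ' : ℝ → ℝ := fun t => (α₂ - 1) / t + (α₁ - 1) / (1 - t) with hφ'
    have hφd : ∀ t ∈ Ioo (0:ℝ) 1, HasDerivAt φ (φ' t) t := by
      intro t ht
      have h1t : (0:ℝ) < 1 - t := by linarith [ht.2]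
      have d1 : HasDerivAt (fun x : ℝ => Real.log x) t⁻¹ t := Real.hasDerivAt_log ht.1.ne'
      have d0 : HasDerivAt (fun x : ℝ => 1 - x) (-1) t := by
        simpa using (hasDerivAt_id t).const_sub 1
      have d2 : HasDerivAt (fun x : ℝ => Real.log (1 - x)) (-1 / (1 - t)) t :=
        d0.log h1t.ne'
      have : HasDerivAt (fun x : ℝ => Real.log α₂ + (α₂ - 1) * Real.log x
          - (Real.log α₁ + (α₁ - 1) * Real.log (1 - x)))
          ((α₂ - 1) * t⁻¹ - (α₁ - 1) * (-1 / (1 - t))) t := ((d1.const_mul (α₂ - 1)).const_add (Real.log α₂)).sub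
        ((d2.const_mul (α₁ - 1)).const_add (Real.log α₁))
      simp only [hφ, hφ']
      convert this using 1
      field_simp
      ring
    have hφcont : ∀ a b : ℝ, 0 < a → b < 1 → ContinuousOn φ (Icc a b) := by
      intro a b ha hb
      intro z hz
      exact ((hφd z ⟨lt_of_lt_of_le ha hz.1, lt_of_le_of_lt hz.2 hb⟩).continuousAt).continuousWithinAt
    -- Rolle twice on φ
    have rolleφ : ∀ a b : ℝ, a ∈ Ioo (0:ℝ) 1 → b ∈ Ioo (0:ℝ) 1 → a < b → φ a = φ b →
        ∃ z ∈ Ioo a b, φ' z = 0 := by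
      intro a b ha hb hab heq
      apply exists_hasDerivAt_eq_zero hab (hφcont a b ha.1 hb.2) heq
      intro z hz
      exact hφd z ⟨lt_trans ha.1 hz.1, lt_trans hz.2 hb.2⟩
    have hc₁c₂ : c₁ < c₂ := lt_trans hc₁.2 hc₂.1
    have hc₂c₃ : c₂ < c₃ := lt_trans hc₂.2 hc₃.1
    obtain ⟨ξ₁, hξ₁, hdξ₁⟩ := rolleφ c₁ c₂ hc₁01 hc₂01 hc₁c₂ (by rw [hφc₁, hφc₂])
    obtain ⟨ξ₂, hξ₂, hdξ₂⟩ := rolleφ c₂ c₃ hc₂01 hc₃01 hc₂c₃ (by rw [hφc₂, hφc₃])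
    have hξ₁01 : ξ₁ ∈ Ioo (0:ℝ) 1 := ⟨lt_trans hc₁01.1 hξ₁.1, lt_trans hξ₁.2 hc₂01.2⟩
    have hξ₂01 : ξ₂ ∈ Ioo (0:ℝ) 1 := ⟨lt_trans hc₂01.1 hξ₂.1, lt_trans hξ₂.2 hc₃01.2⟩
    have hξξ : ξ₁ < ξ₂ := lt_trans hξ₁.2 hξ₂.1
    -- φ' is strictly increasing: contradiction
    have hmono : φ' ξ₁ < φ' ξ₂ := by
      have t1 : (α₂ - 1) / ξ₁ < (α₂ - 1) / ξ₂ := by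
        rw [div_lt_div_iff₀ hξ₁01.1 (lt_trans hξ₁01.1 hξξ)]
        nlinarith
      have t2 : (α₁ - 1) / (1 - ξ₁) < (α₁ - 1) / (1 - ξ₂) := by
        apply div_lt_div_of_pos_left (by linarith) (by linarith [hξ₂01.2]) (by linarith)
      simp only [hφ']
      linarith
    rw [hdξ₁, hdξ₂] at hmono
    exact lt_irrefl 0 hmono
  intro y hy
  rcases lt_trichotomy y c with hlt | heq | hgt
  · exact absurd (main y c hy.1 ⟨hc0, hc1⟩ hy.2 hceq hlt) id
  · exact heq
  · exact absurd (main c y ⟨hc0, hc1⟩ hy.1 hceq hy.2 hgt) id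

theorem unique_r0 (n : ℕ) (hn : 2 ≤ n) (α₁ α₂ : ℝ)
    (hα₂ : 1 - 1 / (n : ℝ) < α₂) (hα₂1 : α₂ < 1) (hα₁ : 1 < α₁) :
    ∃! r : ℝ, r ∈ Ioo (1 / Real.exp 1) 1 ∧
      1 = (-Real.log r) ^ α₂ + Real.log (Real.exp 1 * r) ^ α₁ := by
  have hn2 : (2:ℝ) ≤ (n:ℝ) := by exact_mod_cast hn
  have hα₂0 : 0 < α₂ := by
    have : 1 / (n:ℝ) ≤ 1 / 2 := by
      apply one_div_le_one_div_of_le <;> linarith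
    linarith
  obtain ⟨t, ⟨⟨ht0, ht1⟩, hteq⟩, htuniq⟩ := unique_t_aux α₁ α₂ hα₂0 hα₂1 hα₁
  have hepos : (0:ℝ) < Real.exp 1 := Real.exp_pos 1
  -- the map r ↦ -log r
  have transfer : ∀ r : ℝ, r ∈ Ioo (1 / Real.exp 1) 1 →
      (1 = (-Real.log r) ^ α₂ + Real.log (Real.exp 1 * r) ^ α₁) →
      (-Real.log r) ∈ Ioo (0:ℝ) 1 ∧
        (-Real.log r) ^ α₂ + (1 - (-Real.log r)) ^ α₁ = 1 := by
    intro r hr heq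
    have hr0 : 0 < r := lt_trans (by positivity) hr.1
    have hlogneg : Real.log r < 0 := Real.log_neg hr0 hr.2
    have hloggt : -1 < Real.log r := by
      have : Real.log (1 / Real.exp 1) < Real.log r := Real.log_lt_log (by positivity) hr.1
      rwa [one_div, Real.log_inv, Real.log_exp] at this
    have hlogmul : Real.log (Real.exp 1 * r) = 1 - (-Real.log r) := by
      rw [Real.log_mul (Real.exp_ne_zero 1) hr0.ne', Real.log_exp]
      ring
    refine ⟨⟨by linarith, by linarith⟩, ?_⟩
    rw [← hlogmul]
    linarith [heq]
  refine ⟨Real.exp (-t), ⟨⟨?_, ?_⟩, ?_⟩, ?_⟩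
  · rw [one_div, ← Real.exp_neg]
    exact Real.exp_lt_exp.mpr (by linarith)
  · calc Real.exp (-t) < Real.exp 0 := Real.exp_lt_exp.mpr (by linarith)
    _ = 1 := Real.exp_zero
  · have hlog : Real.log (Real.exp (-t)) = -t := Real.log_exp _
    have hlogmul : Real.log (Real.exp 1 * Real.exp (-t)) = 1 - t := by
      rw [← Real.exp_add, Real.log_exp]
      ring
    rw [hlog, hlogmul, neg_neg]
    exact hteq.symm
  · intro r hr
    have htr := transfer r hr.1 hr.2
    have := htuniq (-Real.log r) htr
    have hr0 : 0 < r := lt_trans (by positivity) hr.1.1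
    rw [← Real.exp_log hr0]
    rw [show Real.log r = -(-Real.log r) by ring, this]
end

section
/- For every α₁ > 1 and 0 < α₂ < 1, the equation (1 - x)^{α₂} + x^{α₁} = 1 has exactly one solution x ∈ (0, 1). -/
open Set

private lemma unique_x0_aux (α₁ α₂ : ℝ) (hα₁ : 1 < α₁) (hα₂0 : 0 < α₂) (hα₂ : α₂ < 1)
    {u v : ℝ} (hu : u ∈ Ioo (0:ℝ) 1) (hv : v ∈ Ioo (0:ℝ) 1) (huv : u < v)
    (hue : (1 - u) ^ α₂ + u ^ α₁ = 1) (hve : (1 - v) ^ α₂ + v ^ α₁ = 1) : False := by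
  have hFcont : Continuous fun t : ℝ => (1 - t) ^ α₂ + t ^ α₁ := by
    apply Continuous.add
    · exact (continuous_const.sub continuous_id).rpow_const (fun t => Or.inr hα₂0.le)
    · exact continuous_id.rpow_const (fun t => Or.inr (by linarith))
  have hF' : ∀ t ∈ Ioo (0:ℝ) 1, HasDerivAt (fun t : ℝ => (1 - t) ^ α₂ + t ^ α₁)
      ((0 - 1) * α₂ * (1 - t) ^ (α₂ - 1) + α₁ * t ^ (α₁ - 1)) t := by
    intro t ht
    exact (((hasDerivAt_const t (1:ℝ)).sub (hasDerivAt_id t)).rpow_const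
      (Or.inl (by show (1:ℝ) - t ≠ 0; intro h; nlinarith [ht.2]))).add
      (Real.hasDerivAt_rpow_const (Or.inr hα₁.le))
  -- any critical point t of F in (0,1) satisfies ψ t = log α₂ - log α₁
  have hψ : ∀ t ∈ Ioo (0:ℝ) 1,
      ((0 - 1) * α₂ * (1 - t) ^ (α₂ - 1) + α₁ * t ^ (α₁ - 1) = 0) →
      (α₁ - 1) * Real.log t - (α₂ - 1) * Real.log (1 - t) = Real.log α₂ - Real.log α₁ := by
    intro t ht h0
    have ht1 : 0 < 1 - t := by linarith [ht.2]
    have heq : α₁ * t ^ (α₁ - 1) = α₂ * (1 - t) ^ (α₂ - 1) := by linarith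
    have hL : Real.log (α₁ * t ^ (α₁ - 1)) = Real.log α₁ + (α₁ - 1) * Real.log t := by
      rw [Real.log_mul (by linarith : (0:ℝ) < α₁).ne' (Real.rpow_pos_of_pos ht.1 _).ne', Real.log_rpow ht.1]
    have hR : Real.log (α₂ * (1 - t) ^ (α₂ - 1)) = Real.log α₂ + (α₂ - 1) * Real.log (1 - t) := by
      rw [Real.log_mul hα₂0.ne' (Real.rpow_pos_of_pos ht1 _).ne', Real.log_rpow ht1]
    have := congrArg Real.log heq
    rw [hL, hR] at this
    linarith
  have hψ' : ∀ t ∈ Ioo (0:ℝ) 1,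
      HasDerivAt (fun t : ℝ => (α₁ - 1) * Real.log t - (α₂ - 1) * Real.log (1 - t))
      ((α₁ - 1) / t + (α₂ - 1) / (1 - t)) t := by
    intro t ht
    have ht1 : 0 < 1 - t := by linarith [ht.2]
    have h1 : HasDerivAt (fun t : ℝ => (α₁ - 1) * Real.log t) ((α₁ - 1) * t⁻¹) t :=
      (Real.hasDerivAt_log ht.1.ne').const_mul _
    have h2 : HasDerivAt (fun t : ℝ => (α₂ - 1) * Real.log (1 - t))
        ((α₂ - 1) * ((0 - 1) / (1 - t))) t :=
      (((hasDerivAt_const t (1:ℝ)).sub (hasDerivAt_id t)).log (by simpa using ht1.ne')).const_mul _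
    have := h1.sub h2
    refine this.congr_deriv ?_
    ring
  -- F takes the value 1 at 0, u, v, 1
  have hF0 : (1 - (0:ℝ)) ^ α₂ + (0:ℝ) ^ α₁ = 1 := by
    rw [sub_zero, Real.one_rpow, Real.zero_rpow (by positivity)]; ring
  have hF1 : (1 - (1:ℝ)) ^ α₂ + (1:ℝ) ^ α₁ = 1 := by
    rw [sub_self, Real.one_rpow, Real.zero_rpow hα₂0.ne']; ring
  -- Rolle three times on F
  obtain ⟨t₁, ht₁, hz₁⟩ := exists_hasDerivAt_eq_zero hu.1 hFcont.continuousOn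
    (by show (1-(0:ℝ))^α₂+(0:ℝ)^α₁ = (1-u)^α₂+u^α₁; rw [hue, hF0]) (fun s hs => hF' s ⟨hs.1, hs.2.trans hu.2⟩)
  obtain ⟨t₂, ht₂, hz₂⟩ := exists_hasDerivAt_eq_zero huv hFcont.continuousOn
    (by show (1-u)^α₂+u^α₁ = (1-v)^α₂+v^α₁; rw [hue, hve]) (fun s hs => hF' s ⟨hu.1.trans hs.1, hs.2.trans hv.2⟩)
  obtain ⟨t₃, ht₃, hz₃⟩ := exists_hasDerivAt_eq_zero hv.2 hFcont.continuousOn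
    (by show (1-v)^α₂+v^α₁ = (1-(1:ℝ))^α₂+(1:ℝ)^α₁; rw [hve, hF1]) (fun s hs => hF' s ⟨hv.1.trans hs.1, hs.2⟩)
  have ht₁m : t₁ ∈ Ioo (0:ℝ) 1 := ⟨ht₁.1, ht₁.2.trans hu.2⟩
  have ht₂m : t₂ ∈ Ioo (0:ℝ) 1 := ⟨hu.1.trans ht₂.1, ht₂.2.trans hv.2⟩
  have ht₃m : t₃ ∈ Ioo (0:ℝ) 1 := ⟨hv.1.trans ht₃.1, ht₃.2⟩
  have h12 : t₁ < t₂ := ht₁.2.trans ht₂.1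
  have h23 : t₂ < t₃ := ht₂.2.trans ht₃.1
  have hψ₁ := hψ t₁ ht₁m hz₁
  have hψ₂ := hψ t₂ ht₂m hz₂
  have hψ₃ := hψ t₃ ht₃m hz₃
  -- Rolle twice on ψ
  have hψcont : ContinuousOn (fun t : ℝ => (α₁ - 1) * Real.log t - (α₂ - 1) * Real.log (1 - t))
      (Ioo (0:ℝ) 1) := fun s hs => ((hψ' s hs).continuousAt).continuousWithinAt
  obtain ⟨s₁, hs₁, hd₁⟩ := exists_hasDerivAt_eq_zero h12
    (hψcont.mono (fun s hs => ⟨lt_of_lt_of_le ht₁m.1 hs.1, lt_of_le_of_lt hs.2 ht₂m.2⟩))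
    (by rw [hψ₁, hψ₂])
    (fun s hs => hψ' s ⟨ht₁m.1.trans hs.1, hs.2.trans ht₂m.2⟩)
  obtain ⟨s₂, hs₂, hd₂⟩ := exists_hasDerivAt_eq_zero h23
    (hψcont.mono (fun s hs => ⟨lt_of_lt_of_le ht₂m.1 hs.1, lt_of_le_of_lt hs.2 ht₃m.2⟩))
    (by rw [hψ₂, hψ₃])
    (fun s hs => hψ' s ⟨ht₂m.1.trans hs.1, hs.2.trans ht₃m.2⟩)
  -- but ψ' is strictly decreasing on (0,1): contradiction
  have hs₁m : s₁ ∈ Ioo (0:ℝ) 1 := ⟨ht₁m.1.trans hs₁.1, hs₁.2.trans ht₂m.2⟩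
  have hs₂m : s₂ ∈ Ioo (0:ℝ) 1 := ⟨ht₂m.1.trans hs₂.1, hs₂.2.trans ht₃m.2⟩
  have hss : s₁ < s₂ := hs₁.2.trans hs₂.1
  have hA : (α₁ - 1) / s₂ < (α₁ - 1) / s₁ :=
    div_lt_div_of_pos_left (by linarith) hs₁m.1 hss
  have hB : (1 - α₂) / (1 - s₁) < (1 - α₂) / (1 - s₂) :=
    div_lt_div_of_pos_left (by linarith) (by linarith [hs₂m.2]) (by linarith)
  have e₁ : (α₂ - 1) / (1 - s₁) = -((1 - α₂) / (1 - s₁)) := by ring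
  have e₂ : (α₂ - 1) / (1 - s₂) = -((1 - α₂) / (1 - s₂)) := by ring
  rw [e₁] at hd₁
  rw [e₂] at hd₂
  linarith

theorem unique_x0 (α₁ α₂ : ℝ) (hα₁ : 1 < α₁) (hα₂0 : 0 < α₂) (hα₂ : α₂ < 1) :
    ∃! x : ℝ, x ∈ Ioo (0 : ℝ) 1 ∧ (1 - x) ^ α₂ + x ^ α₁ = 1 := by
  have hFcont : Continuous fun t : ℝ => (1 - t) ^ α₂ + t ^ α₁ := by
    apply Continuous.add
    · exact (continuous_const.sub continuous_id).rpow_const (fun t => Or.inr hα₂0.le)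
    · exact continuous_id.rpow_const (fun t => Or.inr (by linarith))
  -- choose points where F < 1 and F > 1
  set c₀ : ℝ := α₂ ^ ((2:ℝ) / (α₁ - 1)) with hc₀def
  set t₀ : ℝ := α₁⁻¹ ^ ((2:ℝ) / (1 - α₂)) with ht₀def
  have hc₀ : 0 < c₀ := Real.rpow_pos_of_pos hα₂0 _
  have hinv : 0 < α₁⁻¹ := by positivity
  have hinv1 : α₁⁻¹ < 1 := inv_lt_one_of_one_lt₀ hα₁
  have ht₀ : 0 < t₀ := Real.rpow_pos_of_pos hinv _
  have ht₀1 : t₀ < 1 := Real.rpow_lt_one hinv.le hinv1 (div_pos two_pos (by linarith))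
  set d : ℝ := 1 - t₀ with hddef
  have hd0 : 0 < d := by simp only [hddef]; linarith
  have hd1 : d < 1 := by simp only [hddef]; linarith
  set a : ℝ := min c₀ d / 2 with hadef
  have hmin : 0 < min c₀ d := lt_min hc₀ hd0
  have ha0 : 0 < a := div_pos hmin two_pos
  have had : a < d := lt_of_lt_of_le (half_lt_self hmin) (min_le_right _ _)
  have ha1 : a < 1 := had.trans hd1
  have hac : a ≤ c₀ := le_trans (half_le_self hmin.le) (min_le_left _ _)
  -- F a < 1
  have hFa : (1 - a) ^ α₂ + a ^ α₁ < 1 := by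
    have hbern : (1 - a) ^ α₂ ≤ 1 - α₂ * a := by
      have h := rpow_one_add_le_one_add_mul_self (s := -a) (by linarith) hα₂0.le hα₂.le
      rw [show (1:ℝ) + -a = 1 - a by ring] at h
      linarith
    have h1 : a ^ (α₁ - 1) ≤ c₀ ^ (α₁ - 1) := Real.rpow_le_rpow ha0.le hac (by linarith)
    have h2 : c₀ ^ (α₁ - 1) = α₂ ^ (2:ℝ) := by
      rw [hc₀def, ← Real.rpow_mul hα₂0.le]
      congr 1
      exact div_mul_cancel₀ 2 (by linarith : α₁ - 1 ≠ 0)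
    have h3 : α₂ ^ (2:ℝ) < α₂ := by
      calc α₂ ^ (2:ℝ) < α₂ ^ (1:ℝ) :=
            Real.rpow_lt_rpow_of_exponent_gt hα₂0 hα₂ one_lt_two
        _ = α₂ := Real.rpow_one _
    have h4 : a ^ α₁ = a ^ (α₁ - 1) * a := by
      have h := Real.rpow_add ha0 (α₁ - 1) 1
      rw [Real.rpow_one, show α₁ - 1 + 1 = α₁ from by ring] at h
      exact h
    have h5 : a ^ α₁ < α₂ * a := by
      rw [h4]
      exact mul_lt_mul_of_pos_right (by linarith) ha0
    linarith
  -- F d > 1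
  have hFd : 1 < (1 - d) ^ α₂ + d ^ α₁ := by
    have h1d : 1 - d = t₀ := by rw [hddef]; ring
    have hbern : 1 - α₁ * t₀ ≤ (1 - t₀) ^ α₁ := by
      have h := one_add_mul_self_le_rpow_one_add (s := -t₀) (by linarith) hα₁.le
      rw [show (1:ℝ) + -t₀ = 1 - t₀ by ring] at h
      linarith
    have h1 : t₀ ^ (1 - α₂) = α₁⁻¹ ^ (2:ℝ) := by
      rw [ht₀def, ← Real.rpow_mul hinv.le]
      congr 1
      exact div_mul_cancel₀ 2 (by linarith : 1 - α₂ ≠ 0)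
    have h2 : α₁⁻¹ ^ (2:ℝ) < α₁⁻¹ := by
      calc α₁⁻¹ ^ (2:ℝ) < α₁⁻¹ ^ (1:ℝ) :=
            Real.rpow_lt_rpow_of_exponent_gt hinv hinv1 one_lt_two
        _ = α₁⁻¹ := Real.rpow_one _
    have h4 : t₀ ^ (1 - α₂) < α₁⁻¹ := by rw [h1]; exact h2
    have h5 : 0 < t₀ ^ α₂ := Real.rpow_pos_of_pos ht₀ _
    have h3 : t₀ ^ α₂ * t₀ ^ (1 - α₂) = t₀ := by
      rw [← Real.rpow_add ht₀, show α₂ + (1 - α₂) = 1 by ring, Real.rpow_one]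
    have hgt : α₁ * t₀ < t₀ ^ α₂ := by
      have h6 : t₀ ^ α₂ * t₀ ^ (1 - α₂) < t₀ ^ α₂ * α₁⁻¹ := by
        exact mul_lt_mul_of_pos_left h4 h5
      rw [h3] at h6
      have h7 : α₁ * t₀ < α₁ * (t₀ ^ α₂ * α₁⁻¹) := by
        exact mul_lt_mul_of_pos_left h6 (by linarith)
      have h8 : α₁ * (t₀ ^ α₂ * α₁⁻¹) = t₀ ^ α₂ := by
        field_simp
      linarith
    rw [h1d]
    have : d ^ α₁ = (1 - t₀) ^ α₁ := by rw [hddef]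
    rw [this]
    linarith
  -- intermediate value theorem
  obtain ⟨x, hxmem, hxeq⟩ := intermediate_value_Ioo had.le hFcont.continuousOn
    (show (1:ℝ) ∈ Ioo _ _ from ⟨hFa, hFd⟩)
  have hx01 : x ∈ Ioo (0:ℝ) 1 := ⟨ha0.trans hxmem.1, hxmem.2.trans hd1⟩
  refine ⟨x, ⟨hx01, hxeq⟩, ?_⟩
  rintro y ⟨hy01, hyeq⟩
  by_contra hne
  rcases lt_or_gt_of_ne hne with h | h
  · exact unique_x0_aux α₁ α₂ hα₁ hα₂0 hα₂ hy01 hx01 h hyeq hxeq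
  · exact unique_x0_aux α₁ α₂ hα₁ hα₂0 hα₂ hx01 hy01 h hxeq hyeq
end

section
/- Let n ≥ 2, 1 - 1/n < α₂ < 1 < α₁ with corresponding Q₁ = Q_{α₁,n} and Q₂ = Q_{α₂,n}, and let x₀ ∈ (0,1) solve 1 = (1-x₀)^{α₂} + x₀^{α₁}. Then the quantity Q̂ := Q₁ x₀^{n(α₁-1)+1} + Q₂ (1-x₀)^{n(α₂-1)+1} satisfies Q̂ > max{Q₁, Q₂}. -/
open Set Real MeasureTheory

lemma geom_sum_bound_le {n : ℕ} {a b k : ℝ} (ha : 0 ≤ a) (hab : a ≤ b) (hbk : b ≤ k) :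
    b ^ n - a ^ n ≤ n * k ^ (n - 1) * (b - a) := by
  rw [← geom_sum₂_mul b a n]
  have hk : 0 ≤ k := (ha.trans hab).trans hbk
  refine mul_le_mul_of_nonneg_right ?_ (sub_nonneg.2 hab)
  calc (∑ i ∈ Finset.range n, b ^ i * a ^ (n - 1 - i))
      ≤ ∑ _i ∈ Finset.range n, k ^ (n - 1) := by
        refine Finset.sum_le_sum fun i hi => ?_
        have h1 : b ^ i * a ^ (n - 1 - i) ≤ k ^ i * k ^ (n - 1 - i) :=
          mul_le_mul (pow_le_pow_left₀ (ha.trans hab) hbk i)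
            (pow_le_pow_left₀ ha (hab.trans hbk) _) (pow_nonneg ha _) (pow_nonneg hk _)
        refine h1.trans (le_of_eq ?_)
        rw [← pow_add]
        congr 1
        simp only [Finset.mem_range] at hi
        omega
    _ = n * k ^ (n - 1) := by simp [Finset.sum_const, nsmul_eq_mul]

lemma geom_sum_bound_lt {n : ℕ} (hn : 2 ≤ n) {a b k : ℝ} (ha : 0 ≤ a) (hab : a < b)
    (hbk : b ≤ k) : b ^ n - a ^ n < n * k ^ (n - 1) * (b - a) := by
  rw [← geom_sum₂_mul b a n]
  have hk : 0 ≤ k := (ha.trans hab.le).trans hbk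
  refine mul_lt_mul_of_pos_right ?_ (sub_pos.2 hab)
  have key : (∑ i ∈ Finset.range n, b ^ i * a ^ (n - 1 - i))
      < ∑ _i ∈ Finset.range n, k ^ (n - 1) := by
    refine Finset.sum_lt_sum (fun i hi => ?_) ⟨0, Finset.mem_range.2 (by omega), ?_⟩
    · have h1 : b ^ i * a ^ (n - 1 - i) ≤ k ^ i * k ^ (n - 1 - i) :=
        mul_le_mul (pow_le_pow_left₀ (ha.trans hab.le) hbk i)
          (pow_le_pow_left₀ ha ((hab.le).trans hbk) _) (pow_nonneg ha _) (pow_nonneg hk _)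
      refine h1.trans (le_of_eq ?_)
      rw [← pow_add]; congr 1
      simp only [Finset.mem_range] at hi
      omega
    · simp only [pow_zero, one_mul, Nat.sub_zero]
      exact pow_lt_pow_left₀ (lt_of_lt_of_le hab hbk) ha (by omega)
  calc (∑ i ∈ Finset.range n, b ^ i * a ^ (n - 1 - i))
      < ∑ _i ∈ Finset.range n, k ^ (n - 1) := key
    _ = n * k ^ (n - 1) := by simp [Finset.sum_const, nsmul_eq_mul]

lemma geom_sum_bound_ge {n : ℕ} {a b k : ℝ} (hk : 0 ≤ k) (hkb : k ≤ b) (hba : b ≤ a) :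
    n * k ^ (n - 1) * (a - b) ≤ a ^ n - b ^ n := by
  rw [← geom_sum₂_mul a b n]
  refine mul_le_mul_of_nonneg_right ?_ (sub_nonneg.2 hba)
  calc (n : ℝ) * k ^ (n - 1) = ∑ _i ∈ Finset.range n, k ^ (n - 1) := by
        simp [Finset.sum_const, nsmul_eq_mul]
    _ ≤ ∑ i ∈ Finset.range n, a ^ i * b ^ (n - 1 - i) := by
        refine Finset.sum_le_sum fun i hi => ?_
        have h1 : k ^ i * k ^ (n - 1 - i) ≤ a ^ i * b ^ (n - 1 - i) :=
          mul_le_mul (pow_le_pow_left₀ hk (hkb.trans hba) i)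
            (pow_le_pow_left₀ hk hkb _) (pow_nonneg hk _)
            (pow_nonneg (hk.trans (hkb.trans hba)) _)
        refine le_trans (le_of_eq ?_) h1
        rw [← pow_add]; congr 1
        simp only [Finset.mem_range] at hi
        omega

lemma qc_aux (α₁ α₂ : ℝ) (h1 : 1 < α₁) (h2 : 0 < α₂) (h21 : α₂ < 1)
    {a b x : ℝ} (ha : 0 < a) (hax : a < x) (hxb : x < b) (hb1 : b < 1)
    (hA : α₂ * (1 - a) ^ (α₂ - 1) ≤ α₁ * a ^ (α₁ - 1))
    (hB : α₂ * (1 - b) ^ (α₂ - 1) ≤ α₁ * b ^ (α₁ - 1)) :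
    α₂ * (1 - x) ^ (α₂ - 1) < α₁ * x ^ (α₁ - 1) := by
  have hx0 : 0 < x := ha.trans hax
  have hb0 : 0 < b := hx0.trans hxb
  have hx1 : x < 1 := hxb.trans hb1
  have h1a : 0 < 1 - a := by linarith
  have h1x : 0 < 1 - x := by linarith
  have h1b : 0 < 1 - b := by linarith
  have hba : 0 < b - a := by linarith
  set θ : ℝ := (b - x) / (b - a) with hθdef
  have hθ0 : 0 < θ := div_pos (by linarith) hba
  have hθ1 : 0 < 1 - θ := by
    rw [hθdef]
    have : (b - x) / (b - a) < 1 := (div_lt_one hba).2 (by linarith)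
    linarith
  have hsum : θ + (1 - θ) = 1 := by ring
  have hcomb : θ * a + (1 - θ) * b = x := by
    have hθm : θ * (b - a) = b - x := by rw [hθdef]; exact div_mul_cancel₀ _ hba.ne'
    linear_combination -hθm
  have gA2 : 0 < α₂ * (1 - a) ^ (α₂ - 1) := mul_pos h2 (rpow_pos_of_pos h1a _)
  have gA1 : 0 < α₁ * a ^ (α₁ - 1) := mul_pos (by linarith) (rpow_pos_of_pos ha _)
  have gB2 : 0 < α₂ * (1 - b) ^ (α₂ - 1) := mul_pos h2 (rpow_pos_of_pos h1b _)
  have gB1 : 0 < α₁ * b ^ (α₁ - 1) := mul_pos (by linarith) (rpow_pos_of_pos hb0 _)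
  have LA : log α₂ + (α₂ - 1) * log (1 - a) ≤ log α₁ + (α₁ - 1) * log a := by
    have := (log_le_log_iff gA2 gA1).2 hA
    rwa [log_mul h2.ne' (rpow_pos_of_pos h1a _).ne', log_mul (by linarith : α₁ ≠ 0)
      (rpow_pos_of_pos ha _).ne', log_rpow h1a, log_rpow ha] at this
  have LB : log α₂ + (α₂ - 1) * log (1 - b) ≤ log α₁ + (α₁ - 1) * log b := by
    have := (log_le_log_iff gB2 gB1).2 hB
    rwa [log_mul h2.ne' (rpow_pos_of_pos h1b _).ne', log_mul (by linarith : α₁ ≠ 0)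
      (rpow_pos_of_pos hb0 _).ne', log_rpow h1b, log_rpow hb0] at this
  have hconc1 : θ * log a + (1 - θ) * log b < log x := by
    have := strictConcaveOn_log_Ioi.2 (mem_Ioi.2 ha) (mem_Ioi.2 hb0)
      (ne_of_lt (hax.trans hxb)) hθ0 hθ1 hsum
    simpa [smul_eq_mul, hcomb] using this
  have hconc2 : θ * log (1 - a) + (1 - θ) * log (1 - b) < log (1 - x) := by
    have hcomb2 : θ * (1 - a) + (1 - θ) * (1 - b) = 1 - x := by linear_combination -hcomb
    have := strictConcaveOn_log_Ioi.2 (mem_Ioi.2 h1a) (mem_Ioi.2 h1b)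
      (by intro h; exact (ne_of_lt (hax.trans hxb)) (by linarith)) hθ0 hθ1 hsum
    simpa [smul_eq_mul, hcomb2] using this
  have key : log (α₂ * (1 - x) ^ (α₂ - 1)) < log (α₁ * x ^ (α₁ - 1)) := by
    rw [log_mul h2.ne' (rpow_pos_of_pos h1x _).ne', log_mul (by linarith : α₁ ≠ 0)
      (rpow_pos_of_pos hx0 _).ne', log_rpow h1x, log_rpow hx0]
    have e1 : (α₂ - 1) * log (1 - x) < (α₂ - 1) * (θ * log (1 - a) + (1 - θ) * log (1 - b)) :=
      mul_lt_mul_of_neg_left hconc2 (by linarith)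
    have e2 : (α₁ - 1) * (θ * log a + (1 - θ) * log b) < (α₁ - 1) * log x :=
      mul_lt_mul_of_pos_left hconc1 (by linarith)
    have c1 := mul_le_mul_of_nonneg_left LA hθ0.le
    have c2 := mul_le_mul_of_nonneg_left LB hθ1.le
    have c : log α₂ + (α₂ - 1) * (θ * log (1 - a) + (1 - θ) * log (1 - b))
        ≤ log α₁ + (α₁ - 1) * (θ * log a + (1 - θ) * log b) := by
      calc log α₂ + (α₂ - 1) * (θ * log (1 - a) + (1 - θ) * log (1 - b))
          = θ * (log α₂ + (α₂ - 1) * log (1 - a))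
            + (1 - θ) * (log α₂ + (α₂ - 1) * log (1 - b)) := by ring
        _ ≤ θ * (log α₁ + (α₁ - 1) * log a)
            + (1 - θ) * (log α₁ + (α₁ - 1) * log b) := add_le_add c1 c2
        _ = log α₁ + (α₁ - 1) * (θ * log a + (1 - θ) * log b) := by ring
    linarith [e1, e2, c]
  exact (log_lt_log_iff (mul_pos h2 (rpow_pos_of_pos h1x _)) (mul_pos (by linarith : (0:ℝ) < α₁) (rpow_pos_of_pos hx0 _))).1 key

lemma cross_at_x₀ (α₁ α₂ : ℝ) (h1 : 1 < α₁) (h2 : 0 < α₂) (h21 : α₂ < 1)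
    {x₀ : ℝ} (ht0 : 0 < x₀) (ht1 : x₀ < 1)
    (heq : 1 = (1 - x₀) ^ α₂ + x₀ ^ α₁) :
    α₂ * (1 - x₀) ^ (α₂ - 1) < α₁ * x₀ ^ (α₁ - 1) := by
  have hα₁0 : (0:ℝ) < α₁ := by linarith
  set G : ℝ → ℝ := fun x => x ^ α₁ + (1 - x) ^ α₂ - 1 with hGdef
  have Gcont : Continuous G := by
    refine ((Real.continuous_rpow_const hα₁0.le).add
      ((continuous_const.sub continuous_id).rpow_const fun x => Or.inr h2.le)).sub
        continuous_const
  have Gderiv : ∀ x ∈ Ioo (0:ℝ) 1, HasDerivAt G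
      (α₁ * x ^ (α₁ - 1) - α₂ * (1 - x) ^ (α₂ - 1)) x := by
    intro x hx
    have hx0 : x ≠ 0 := ne_of_gt hx.1
    have h1x : (1:ℝ) - x ≠ 0 := by have := hx.2; intro h; linarith [h]
    have d1 : HasDerivAt (fun x : ℝ => x ^ α₁) (α₁ * x ^ (α₁ - 1)) x :=
      Real.hasDerivAt_rpow_const (Or.inl hx0)
    have d2' : HasDerivAt (fun x : ℝ => 1 - x) (-1) x := by
      simpa using (hasDerivAt_id x).const_sub 1
    have d2 := d2'.rpow_const (p := α₂) (Or.inl h1x)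
    have := (d1.add d2).sub_const 1
    refine HasDerivAt.congr_deriv this ?_
    ring
  have hG0 : G 0 = 0 := by
    simp [hGdef, Real.zero_rpow (ne_of_gt hα₁0), Real.one_rpow]
  have hG1 : G 1 = 0 := by
    simp [hGdef, Real.zero_rpow (ne_of_gt h2), Real.one_rpow]
  have hGt : G x₀ = 0 := by simp [hGdef]; linarith [heq]
  by_contra hcon
  push_neg at hcon
  by_cases hE : ∃ y, x₀ < y ∧ y < 1 ∧ α₂ * (1 - y) ^ (α₂ - 1) ≤ α₁ * y ^ (α₁ - 1)
  · obtain ⟨y, hy1, hy2, hy3⟩ := hE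
    have hneg : ∀ x ∈ Ioo (0:ℝ) x₀, α₁ * x ^ (α₁ - 1) - α₂ * (1 - x) ^ (α₂ - 1) < 0 := by
      intro x hx
      by_contra h
      push_neg at h
      have hA : α₂ * (1 - x) ^ (α₂ - 1) ≤ α₁ * x ^ (α₁ - 1) := by linarith
      have := qc_aux α₁ α₂ h1 h2 h21 hx.1 hx.2 hy1 hy2 hA hy3
      linarith
    have hanti : StrictAntiOn G (Icc 0 x₀) := by
      refine strictAntiOn_of_deriv_neg (convex_Icc _ _) Gcont.continuousOn ?_
      intro x hx
      rw [interior_Icc] at hx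
      rw [HasDerivAt.deriv (Gderiv x ⟨hx.1, hx.2.trans ht1⟩)]
      exact hneg x hx
    have := hanti (left_mem_Icc.2 ht0.le) (right_mem_Icc.2 ht0.le) ht0
    rw [hG0, hGt] at this
    exact lt_irrefl 0 this
  · push_neg at hE
    have hneg : ∀ x ∈ Ioo x₀ (1:ℝ), α₁ * x ^ (α₁ - 1) - α₂ * (1 - x) ^ (α₂ - 1) < 0 := by
      intro x hx
      have := hE x hx.1 hx.2
      linarith
    have hanti : StrictAntiOn G (Icc x₀ 1) := by
      refine strictAntiOn_of_deriv_neg (convex_Icc _ _) Gcont.continuousOn ?_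
      intro x hx
      rw [interior_Icc] at hx
      rw [HasDerivAt.deriv (Gderiv x ⟨ht0.trans hx.1, hx.2⟩)]
      exact hneg x hx
    have := hanti (left_mem_Icc.2 ht1.le) (right_mem_Icc.2 ht1.le) ht1
    rw [hG1, hGt] at this
    exact lt_irrefl 0 this

lemma expand_pow₁ (α₁ : ℝ) (n : ℕ) {x : ℝ} (hx : 0 ≤ x) :
    (α₁ * x ^ (α₁ - 1)) ^ n = α₁ ^ n * x ^ ((n : ℝ) * (α₁ - 1)) := by
  rw [mul_pow, ← Real.rpow_natCast (x ^ (α₁ - 1)) n, ← Real.rpow_mul hx,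
    mul_comm (α₁ - 1) (n : ℝ)]

lemma region1 (α₁ α₂ : ℝ) (n : ℕ) (hn : 2 ≤ n) (h1 : 1 < α₁) (h2 : 0 < α₂) (h21 : α₂ < 1)
    {x₀ : ℝ} (ht0 : 0 < x₀) (ht1 : x₀ < 1)
    (hcross : α₂ * (1 - x₀) ^ (α₂ - 1) < α₁ * x₀ ^ (α₁ - 1)) :
    ∃ K : ℝ,
      (∀ x ∈ Icc (0:ℝ) x₀,
        α₂ ^ n * (1 - x) ^ ((n : ℝ) * (α₂ - 1)) - K * α₂ * (1 - x) ^ (α₂ - 1)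
          ≤ α₁ ^ n * x ^ ((n : ℝ) * (α₁ - 1)) - K * α₁ * x ^ (α₁ - 1))
      ∧ α₂ ^ n - K * α₂ < 0 := by
  classical
  have hα₁0 : (0:ℝ) < α₁ := by linarith
  set S : Set ℝ := {x | x ∈ Ioc (0:ℝ) x₀ ∧ α₂ * (1 - x) ^ (α₂ - 1) ≤ α₁ * x ^ (α₁ - 1)} with hSdef
  have hx₀S : x₀ ∈ S := ⟨⟨ht0, le_refl _⟩, hcross.le⟩
  have hbdd : BddBelow S := ⟨0, fun z hz => hz.1.1.le⟩
  have hc0 : 0 ≤ sInf S := le_csInf ⟨x₀, hx₀S⟩ fun z hz => hz.1.1.le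
  have hct : sInf S ≤ x₀ := csInf_le hbdd hx₀S
  set c := sInf S with hcdef
  have hc1 : c < 1 := lt_of_le_of_lt hct ht1
  set k : ℝ := α₂ * (1 - c) ^ (α₂ - 1) with hkdef
  have hkα₂ : α₂ ≤ k := by
    have h := Real.rpow_le_rpow_of_nonpos (by linarith : (0:ℝ) < 1 - c)
      (by linarith : 1 - c ≤ 1) (by linarith : α₂ - 1 ≤ 0)
    rw [Real.one_rpow] at h
    nlinarith
  have hk0 : 0 ≤ k := le_trans h2.le hkα₂
  refine ⟨(n : ℝ) * k ^ (n - 1), ?_, ?_⟩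
  · intro x hx
    have hx1 : x < 1 := lt_of_le_of_lt hx.2 ht1
    have h1x : (0:ℝ) ≤ 1 - x := by linarith
    have ha0 : 0 ≤ α₁ * x ^ (α₁ - 1) := mul_nonneg hα₁0.le (Real.rpow_nonneg hx.1 _)
    have hb0 : 0 ≤ α₂ * (1 - x) ^ (α₂ - 1) := mul_nonneg h2.le (Real.rpow_nonneg h1x _)
    rw [← expand_pow₁ α₁ n hx.1, ← expand_pow₁ α₂ n h1x, mul_assoc, mul_assoc]
    by_cases hcase : α₂ * (1 - x) ^ (α₂ - 1) ≤ α₁ * x ^ (α₁ - 1)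
    · have hx0 : 0 < x := by
        rcases eq_or_lt_of_le hx.1 with h | h
        · exfalso
          rw [← h] at hcase
          have e1 : (0:ℝ) ^ (α₁ - 1) = 0 := Real.zero_rpow (by linarith)
          have e2 : ((1:ℝ) - 0) ^ (α₂ - 1) = 1 := by norm_num
          rw [e1, e2] at hcase
          nlinarith
        · exact h
      have hcx : c ≤ x := csInf_le hbdd ⟨⟨hx0, hx.2⟩, hcase⟩
      have hkb : k ≤ α₂ * (1 - x) ^ (α₂ - 1) := by
        have h := Real.rpow_le_rpow_of_nonpos (by linarith : (0:ℝ) < 1 - x)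
          (by linarith : 1 - x ≤ 1 - c) (by linarith : α₂ - 1 ≤ 0)
        rw [hkdef]
        nlinarith
      have := geom_sum_bound_ge (n := n) hk0 hkb hcase
      linarith
    · push_neg at hcase
      have hxc : x ≤ c := by
        by_contra h
        push_neg at h
        obtain ⟨z, hzS, hzx⟩ := exists_lt_of_csInf_lt ⟨x₀, hx₀S⟩ h
        rcases eq_or_lt_of_le hx.2 with h' | h'
        · rw [h'] at hcase; linarith
        · have := qc_aux α₁ α₂ h1 h2 h21 hzS.1.1 hzx h' ht1 hzS.2 hcross.le
          linarith
      have hbk : α₂ * (1 - x) ^ (α₂ - 1) ≤ k := by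
        have h := Real.rpow_le_rpow_of_nonpos (by linarith : (0:ℝ) < 1 - c)
          (by linarith : 1 - c ≤ 1 - x) (by linarith : α₂ - 1 ≤ 0)
        rw [hkdef]
        nlinarith
      have := geom_sum_bound_le (n := n) ha0 hcase.le hbk
      linarith
  · have h := geom_sum_bound_lt (n := n) hn (le_refl (0:ℝ)) h2 hkα₂
    have h0 : (0:ℝ) ^ n = 0 := zero_pow (by omega)
    rw [h0] at h
    nlinarith

lemma region2 (α₁ α₂ : ℝ) (n : ℕ) (hn : 2 ≤ n) (h1 : 1 < α₁) (h2 : 0 < α₂) (h21 : α₂ < 1)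
    {x₀ : ℝ} (ht0 : 0 < x₀) (ht1 : x₀ < 1)
    (hcross : α₂ * (1 - x₀) ^ (α₂ - 1) < α₁ * x₀ ^ (α₁ - 1)) :
    ∃ K : ℝ,
      (∀ x ∈ Ico x₀ (1:ℝ),
        α₁ ^ n * x ^ ((n : ℝ) * (α₁ - 1)) - K * α₁ * x ^ (α₁ - 1)
          ≤ α₂ ^ n * (1 - x) ^ ((n : ℝ) * (α₂ - 1)) - K * α₂ * (1 - x) ^ (α₂ - 1))
      ∧ α₁ ^ n * x₀ ^ ((n : ℝ) * (α₁ - 1)) - K * α₁ * x₀ ^ (α₁ - 1)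
          < α₂ ^ n * (1 - x₀) ^ ((n : ℝ) * (α₂ - 1)) - K * α₂ * (1 - x₀) ^ (α₂ - 1) := by
  classical
  have hα₁0 : (0:ℝ) < α₁ := by linarith
  -- the threshold beyond which g₁ < g₂ always
  set d : ℝ := (α₂ / α₁) ^ (1 / (1 - α₂)) with hddef
  have hρ0 : (0:ℝ) < α₂ / α₁ := div_pos h2 hα₁0
  have hd0 : 0 < d := Real.rpow_pos_of_pos hρ0 _
  set b₀ : ℝ := max x₀ (1 - d / 2) with hb₀def
  have hb₀x : x₀ ≤ b₀ := le_max_left _ _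
  have hb₀1 : b₀ < 1 := max_lt ht1 (by linarith)
  have hb₀prop : ∀ y, b₀ ≤ y → y < 1 → α₁ * y ^ (α₁ - 1) < α₂ * (1 - y) ^ (α₂ - 1) := by
    intro y hy hy1
    have hy0 : 0 < y := lt_of_lt_of_le ht0 (le_trans hb₀x hy)
    have h1y : 0 < 1 - y := by linarith
    have e0 : α₁ * y ^ (α₁ - 1) < α₁ := by
      have := Real.rpow_lt_one hy0.le hy1 (by linarith : (0:ℝ) < α₁ - 1)
      nlinarith
    have hdy : 1 - y < d := by
      have h1 : 1 - d / 2 ≤ b₀ := le_max_right _ _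
      linarith
    have e1 : (1 - y) ^ (1 - α₂) < d ^ (1 - α₂) :=
      Real.rpow_lt_rpow h1y.le hdy (by linarith)
    have e2 : d ^ (1 - α₂) = α₂ / α₁ := by
      rw [hddef, ← Real.rpow_mul hρ0.le, one_div_mul_cancel (by linarith : (1:ℝ) - α₂ ≠ 0),
        Real.rpow_one]
    have e3 : (1 - y) ^ (α₂ - 1) = ((1 - y) ^ (1 - α₂))⁻¹ := by
      rw [show α₂ - 1 = -(1 - α₂) by ring, Real.rpow_neg h1y.le]
    have hApos : 0 < (1 - y) ^ (1 - α₂) := Real.rpow_pos_of_pos h1y _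
    have e4 : α₁ < α₂ * ((1 - y) ^ (1 - α₂))⁻¹ := by
      rw [← div_eq_mul_inv, lt_div_iff₀ hApos]
      rw [e2] at e1
      rw [lt_div_iff₀ hα₁0] at e1
      nlinarith
    rw [e3]
    linarith
  set S : Set ℝ := {x | x ∈ Icc x₀ b₀ ∧ α₂ * (1 - x) ^ (α₂ - 1) ≤ α₁ * x ^ (α₁ - 1)} with hSdef
  have hx₀S : x₀ ∈ S := ⟨⟨le_refl _, hb₀x⟩, hcross.le⟩
  have hbdd : BddAbove S := ⟨b₀, fun z hz => hz.1.2⟩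
  set c := sSup S with hcdef
  have hcl : x₀ ≤ c := le_csSup hbdd hx₀S
  have hcu : c ≤ b₀ := csSup_le ⟨x₀, hx₀S⟩ fun z hz => hz.1.2
  have hc0 : 0 ≤ c := le_trans ht0.le hcl
  have hc1 : c < 1 := lt_of_le_of_lt hcu hb₀1
  set k : ℝ := α₁ * c ^ (α₁ - 1) with hkdef
  have hk0 : 0 ≤ k := mul_nonneg hα₁0.le (Real.rpow_nonneg hc0 _)
  have hkt : α₁ * x₀ ^ (α₁ - 1) ≤ k := by
    have := Real.rpow_le_rpow ht0.le hcl (by linarith : (0:ℝ) ≤ α₁ - 1)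
    rw [hkdef]; nlinarith
  refine ⟨(n : ℝ) * k ^ (n - 1), ?_, ?_⟩
  · intro x hx
    have hx0 : 0 < x := lt_of_lt_of_le ht0 hx.1
    have h1x : (0:ℝ) ≤ 1 - x := by linarith [hx.2]
    have ha0 : 0 ≤ α₁ * x ^ (α₁ - 1) := mul_nonneg hα₁0.le (Real.rpow_nonneg hx0.le _)
    have hb0 : 0 ≤ α₂ * (1 - x) ^ (α₂ - 1) := mul_nonneg h2.le (Real.rpow_nonneg h1x _)
    rw [← expand_pow₁ α₁ n hx0.le, ← expand_pow₁ α₂ n h1x, mul_assoc, mul_assoc]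
    by_cases hcase : α₂ * (1 - x) ^ (α₂ - 1) ≤ α₁ * x ^ (α₁ - 1)
    · have hxb₀ : x ≤ b₀ := by
        by_contra h
        push_neg at h
        have := hb₀prop x h.le hx.2
        linarith
      have hxc : x ≤ c := le_csSup hbdd ⟨⟨hx.1, hxb₀⟩, hcase⟩
      have hbk : α₁ * x ^ (α₁ - 1) ≤ k := by
        have := Real.rpow_le_rpow hx0.le hxc (by linarith : (0:ℝ) ≤ α₁ - 1)
        rw [hkdef]; nlinarith
      have := geom_sum_bound_le (n := n) hb0 hcase hbk
      linarith
    · push_neg at hcase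
      have hcx : c ≤ x := by
        by_contra h
        push_neg at h
        obtain ⟨z, hzS, hxz⟩ := exists_lt_of_lt_csSup ⟨x₀, hx₀S⟩ h
        rcases eq_or_lt_of_le hx.1 with h' | h'
        · rw [← h'] at hcase; linarith
        · have := qc_aux α₁ α₂ h1 h2 h21 ht0 h' hxz
            (lt_of_le_of_lt hzS.1.2 hb₀1) hcross.le hzS.2
          linarith
      have hkb : k ≤ α₁ * x ^ (α₁ - 1) := by
        have := Real.rpow_le_rpow hc0 hcx (by linarith : (0:ℝ) ≤ α₁ - 1)
        rw [hkdef]; nlinarith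
      have := geom_sum_bound_ge (n := n) hk0 hkb hcase.le
      linarith
  · have h1t : (0:ℝ) ≤ 1 - x₀ := by linarith
    have hb0 : 0 ≤ α₂ * (1 - x₀) ^ (α₂ - 1) := mul_nonneg h2.le (Real.rpow_nonneg h1t _)
    rw [← expand_pow₁ α₁ n ht0.le, ← expand_pow₁ α₂ n h1t, mul_assoc, mul_assoc]
    have := geom_sum_bound_lt (n := n) hn hb0 hcross hkt
    linarith

lemma ftc_pow (A r a b : ℝ) (hr : 1 ≤ r) :
    ∫ x in a..b, A * x ^ (r - 1) = A / r * b ^ r - A / r * a ^ r := by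
  have hr0 : (0 : ℝ) < r := lt_of_lt_of_le one_pos hr
  have hint : IntervalIntegrable (fun x : ℝ => A * x ^ (r - 1)) MeasureTheory.volume a b :=
    (continuous_const.mul (Real.continuous_rpow_const
      (by linarith : (0:ℝ) ≤ r - 1))).intervalIntegrable a b
  have hderiv : ∀ x ∈ Set.uIcc a b,
      HasDerivAt (fun x : ℝ => A / r * x ^ r) (A * x ^ (r - 1)) x := by
    intro x _
    have h := (Real.hasDerivAt_rpow_const (x := x) (p := r) (Or.inr hr)).const_mul (A / r)
    refine HasDerivAt.congr_deriv h ?_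
    rw [← mul_assoc, div_mul_cancel₀ _ hr0.ne']
  rw [intervalIntegral.integral_eq_sub_of_hasDerivAt hderiv hint]

lemma ftc_one_sub (A r a b : ℝ) (hr : 0 < r) (hab : a ≤ b) (hb : b ≤ 1) :
    ∫ x in a..b, A * (1 - x) ^ (r - 1) = A / r * (1 - a) ^ r - A / r * (1 - b) ^ r := by
  have hint : IntervalIntegrable (fun x : ℝ => A * (1 - x) ^ (r - 1)) MeasureTheory.volume a b := by
    have h1 : IntervalIntegrable (fun x : ℝ => x ^ (r - 1)) MeasureTheory.volume (1 - a) (1 - b) :=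
      intervalIntegral.intervalIntegrable_rpow' (by linarith)
    have h2 := h1.comp_sub_left 1
    simp only [sub_sub_cancel] at h2
    exact h2.const_mul A
  have hcont : ContinuousOn (fun x : ℝ => -(A / r) * (1 - x) ^ r) (Icc a b) :=
    (continuous_const.mul ((continuous_const.sub continuous_id).rpow_const
      (fun x => Or.inr hr.le))).continuousOn
  have hderiv : ∀ x ∈ Ioo a b,
      HasDerivAt (fun x : ℝ => -(A / r) * (1 - x) ^ r) (A * (1 - x) ^ (r - 1)) x := by
    intro x hx
    have hne : (1 : ℝ) - x ≠ 0 := by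
      have := hx.2; nlinarith [hb]
    have h1 : HasDerivAt (fun x : ℝ => 1 - x) (-1) x := by
      simpa using (hasDerivAt_id x).const_sub 1
    have h2 := (h1.rpow_const (p := r) (Or.inl hne)).const_mul (-(A / r))
    refine HasDerivAt.congr_deriv h2 ?_
    field_simp
  have := intervalIntegral.integral_eq_sub_of_hasDerivAt_of_le hab hcont hderiv hint
  rw [this]; ring

lemma ftc_pow' (A r e a b : ℝ) (he : e = r - 1) (hr : 1 ≤ r) :
    ∫ x in a..b, A * x ^ e = A / r * b ^ r - A / r * a ^ r := by
  subst he; exact ftc_pow A r a b hr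

lemma ftc_one_sub' (A r e a b : ℝ) (he : e = r - 1) (hr : 0 < r) (hab : a ≤ b) (hb : b ≤ 1) :
    ∫ x in a..b, A * (1 - x) ^ e = A / r * (1 - a) ^ r - A / r * (1 - b) ^ r := by
  subst he; exact ftc_one_sub A r a b hr hab hb

lemma cont_one_sub_rpow (r a b : ℝ) (hb : b < 1) :
    ContinuousOn (fun y : ℝ => (1 - y) ^ r) (Icc a b) := by
  intro x hx
  have hne : (1 : ℝ) - x ≠ 0 := ne_of_gt (by linarith [hx.2])
  exact (ContinuousAt.comp (Real.continuousAt_rpow_const (1 - x) r (Or.inl hne))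
    ((continuous_const.sub continuous_id).continuousAt)).continuousWithinAt

lemma int_one_sub_rpow (c : ℝ) (hc : -1 < c) (a b : ℝ) :
    IntervalIntegrable (fun x : ℝ => (1 - x) ^ c) volume a b := by
  have h1 : IntervalIntegrable (fun x : ℝ => x ^ c) volume (1 - a) (1 - b) :=
    intervalIntegral.intervalIntegrable_rpow' hc
  have h2 := h1.comp_sub_left 1
  simpa [sub_sub_cancel] using h2

lemma integral_ineq1 (α₁ α₂ K x₀ : ℝ) (n : ℕ) (hn : 0 < n)
    (h1 : 1 < α₁) (h2 : 0 < α₂) (h21 : α₂ < 1) (ht0 : 0 < x₀) (ht1 : x₀ < 1)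
    (hβ₂0 : 0 < (n : ℝ) * (α₂ - 1) + 1)
    (P : ∀ x ∈ Icc (0:ℝ) x₀,
        α₂ ^ n * (1 - x) ^ ((n : ℝ) * (α₂ - 1)) - K * α₂ * (1 - x) ^ (α₂ - 1)
          ≤ α₁ ^ n * x ^ ((n : ℝ) * (α₁ - 1)) - K * α₁ * x ^ (α₁ - 1))
    (Ps : α₂ ^ n - K * α₂ < 0) :
    α₂ ^ n / ((n : ℝ) * (α₂ - 1) + 1)
      - α₂ ^ n / ((n : ℝ) * (α₂ - 1) + 1) * (1 - x₀) ^ ((n : ℝ) * (α₂ - 1) + 1)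
      - (K * (1 : ℝ) - K * (1 - x₀) ^ α₂)
      < α₁ ^ n / ((n : ℝ) * (α₁ - 1) + 1) * x₀ ^ ((n : ℝ) * (α₁ - 1) + 1)
        - K * x₀ ^ α₁ := by
  have hα₁0 : (0:ℝ) < α₁ := by linarith
  have hn0 : (0:ℝ) < (n : ℝ) := by exact_mod_cast hn
  have hnp' : (0:ℝ) < (n : ℝ) * (α₁ - 1) := mul_pos hn0 (by linarith)
  have hnp : (0:ℝ) ≤ (n : ℝ) * (α₁ - 1) := hnp'.le
  -- continuity
  have c1 : ContinuousOn (fun x : ℝ =>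
      α₂ ^ n * (1 - x) ^ ((n : ℝ) * (α₂ - 1)) - K * α₂ * (1 - x) ^ (α₂ - 1)) (Icc 0 x₀) :=
    (continuousOn_const.mul (cont_one_sub_rpow _ _ _ ht1)).sub
      (continuousOn_const.mul (cont_one_sub_rpow _ _ _ ht1))
  have c2 : Continuous (fun x : ℝ =>
      α₁ ^ n * x ^ ((n : ℝ) * (α₁ - 1)) - K * α₁ * x ^ (α₁ - 1)) :=
    (continuous_const.mul (Real.continuous_rpow_const hnp)).sub
      (continuous_const.mul (Real.continuous_rpow_const (by linarith)))
  have key : (∫ x in (0:ℝ)..x₀,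
        (α₂ ^ n * (1 - x) ^ ((n : ℝ) * (α₂ - 1)) - K * α₂ * (1 - x) ^ (α₂ - 1)))
      < ∫ x in (0:ℝ)..x₀,
        (α₁ ^ n * x ^ ((n : ℝ) * (α₁ - 1)) - K * α₁ * x ^ (α₁ - 1)) := by
    refine intervalIntegral.integral_lt_integral_of_continuousOn_of_le_of_exists_lt ht0
      c1 c2.continuousOn (fun x hx => P x ⟨hx.1.le, hx.2⟩) ⟨0, ⟨le_refl _, ht0.le⟩, ?_⟩
    have e1 : ((1:ℝ) - 0) ^ ((n : ℝ) * (α₂ - 1)) = 1 := by norm_num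
    have e2 : ((1:ℝ) - 0) ^ (α₂ - 1) = 1 := by norm_num
    have e3 : (0:ℝ) ^ ((n : ℝ) * (α₁ - 1)) = 0 := Real.zero_rpow (by linarith)
    have e4 : (0:ℝ) ^ (α₁ - 1) = 0 := Real.zero_rpow (by linarith)
    rw [e1, e2, e3, e4]
    simpa using Ps
  -- integrability of the four pieces on [0, x₀]
  have huicc : uIcc (0:ℝ) x₀ = Icc 0 x₀ := uIcc_of_le ht0.le
  have i1 : IntervalIntegrable (fun x : ℝ => α₂ ^ n * (1 - x) ^ ((n : ℝ) * (α₂ - 1)))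
      volume 0 x₀ := by
    refine ContinuousOn.intervalIntegrable ?_
    rw [huicc]
    exact continuousOn_const.mul (cont_one_sub_rpow _ _ _ ht1)
  have i2 : IntervalIntegrable (fun x : ℝ => K * α₂ * (1 - x) ^ (α₂ - 1)) volume 0 x₀ := by
    refine ContinuousOn.intervalIntegrable ?_
    rw [huicc]
    exact continuousOn_const.mul (cont_one_sub_rpow _ _ _ ht1)
  have i3 : IntervalIntegrable (fun x : ℝ => α₁ ^ n * x ^ ((n : ℝ) * (α₁ - 1))) volume 0 x₀ :=
    (continuous_const.mul (Real.continuous_rpow_const hnp)).intervalIntegrable _ _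
  have i4 : IntervalIntegrable (fun x : ℝ => K * α₁ * x ^ (α₁ - 1)) volume 0 x₀ :=
    (continuous_const.mul (Real.continuous_rpow_const (by linarith))).intervalIntegrable _ _
  rw [intervalIntegral.integral_sub i1 i2, intervalIntegral.integral_sub i3 i4] at key
  rw [ftc_pow' (α₁ ^ n) ((n : ℝ) * (α₁ - 1) + 1) _ 0 x₀ (by ring) (by linarith [hnp]),
    ftc_pow' (K * α₁) α₁ _ 0 x₀ (by ring) h1.le,
    ftc_one_sub' (α₂ ^ n) ((n : ℝ) * (α₂ - 1) + 1) _ 0 x₀ (by ring) hβ₂0 ht0.le ht1.le,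
    ftc_one_sub' (K * α₂) α₂ _ 0 x₀ (by ring) h2 ht0.le ht1.le] at key
  have z1 : (0:ℝ) ^ ((n : ℝ) * (α₁ - 1) + 1) = 0 := Real.zero_rpow (by linarith)
  have z2 : (0:ℝ) ^ α₁ = 0 := Real.zero_rpow (by linarith)
  have o1 : ((1:ℝ) - 0) ^ ((n : ℝ) * (α₂ - 1) + 1) = 1 := by
    norm_num
  have o2 : ((1:ℝ) - 0) ^ α₂ = 1 := by norm_num
  rw [z1, z2, o1, o2] at key
  have d1 : K * α₁ / α₁ = K := by field_simp
  have d2 : K * α₂ / α₂ = K := by field_simp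
  rw [d1, d2] at key
  linarith

lemma integral_ineq2 (α₁ α₂ K x₀ : ℝ) (n : ℕ) (hn : 0 < n)
    (h1 : 1 < α₁) (h2 : 0 < α₂) (h21 : α₂ < 1) (ht0 : 0 < x₀) (ht1 : x₀ < 1)
    (hβ₂0 : 0 < (n : ℝ) * (α₂ - 1) + 1) (hβ₂1 : -1 < (n : ℝ) * (α₂ - 1))
    (P : ∀ x ∈ Ico x₀ (1:ℝ),
        α₁ ^ n * x ^ ((n : ℝ) * (α₁ - 1)) - K * α₁ * x ^ (α₁ - 1)
          ≤ α₂ ^ n * (1 - x) ^ ((n : ℝ) * (α₂ - 1)) - K * α₂ * (1 - x) ^ (α₂ - 1))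
    (Ps : α₁ ^ n * x₀ ^ ((n : ℝ) * (α₁ - 1)) - K * α₁ * x₀ ^ (α₁ - 1)
          < α₂ ^ n * (1 - x₀) ^ ((n : ℝ) * (α₂ - 1)) - K * α₂ * (1 - x₀) ^ (α₂ - 1)) :
    α₁ ^ n / ((n : ℝ) * (α₁ - 1) + 1)
      - α₁ ^ n / ((n : ℝ) * (α₁ - 1) + 1) * x₀ ^ ((n : ℝ) * (α₁ - 1) + 1)
      - (K * (1:ℝ) - K * x₀ ^ α₁)
      < α₂ ^ n / ((n : ℝ) * (α₂ - 1) + 1) * (1 - x₀) ^ ((n : ℝ) * (α₂ - 1) + 1)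
        - K * (1 - x₀) ^ α₂ := by
  have hα₁0 : (0:ℝ) < α₁ := by linarith
  have hn0 : (0:ℝ) < (n : ℝ) := by exact_mod_cast hn
  have hnp' : (0:ℝ) < (n : ℝ) * (α₁ - 1) := mul_pos hn0 (by linarith)
  have hnp : (0:ℝ) ≤ (n : ℝ) * (α₁ - 1) := hnp'.le
  set m : ℝ := (x₀ + 1) / 2 with hmdef
  have hm0 : x₀ < m := by rw [hmdef]; linarith
  have hm1 : m < 1 := by rw [hmdef]; linarith
  set L : ℝ → ℝ := fun x => α₁ ^ n * x ^ ((n : ℝ) * (α₁ - 1)) - K * α₁ * x ^ (α₁ - 1)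
    with hLdef
  set R : ℝ → ℝ := fun x => α₂ ^ n * (1 - x) ^ ((n : ℝ) * (α₂ - 1))
    - K * α₂ * (1 - x) ^ (α₂ - 1) with hRdef
  have hLcont : Continuous L :=
    (continuous_const.mul (Real.continuous_rpow_const hnp)).sub
      (continuous_const.mul (Real.continuous_rpow_const (by linarith)))
  have hLint : ∀ a b : ℝ, IntervalIntegrable L volume a b := fun a b =>
    hLcont.intervalIntegrable a b
  have hRint : ∀ a b : ℝ, IntervalIntegrable R volume a b := by
    intro a b
    exact ((int_one_sub_rpow _ hβ₂1 a b).const_mul (α₂ ^ n)).sub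
      ((int_one_sub_rpow _ (by linarith : (-1:ℝ) < α₂ - 1) a b).const_mul (K * α₂))
  -- strict inequality on [x₀, m]
  have step1 : (∫ x in x₀..m, L x) < ∫ x in x₀..m, R x := by
    refine intervalIntegral.integral_lt_integral_of_continuousOn_of_le_of_exists_lt hm0
      hLcont.continuousOn ?_ ?_ ⟨x₀, ⟨le_refl _, hm0.le⟩, Ps⟩
    · exact (continuousOn_const.mul (cont_one_sub_rpow _ _ _ hm1)).sub
        (continuousOn_const.mul (cont_one_sub_rpow _ _ _ hm1))
    · intro x hx
      exact P x ⟨hx.1.le, lt_of_le_of_lt hx.2 hm1⟩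
  -- weak inequality on [m, 1]
  have step2 : (∫ x in m..(1:ℝ), L x) ≤ ∫ x in m..(1:ℝ), R x := by
    have hnn : 0 ≤ ∫ x in m..(1:ℝ), (R x - L x) := by
      refine intervalIntegral.integral_nonneg_of_ae_restrict hm1.le ?_
      have h1 : ∀ᵐ (x:ℝ) ∂(volume.restrict (Icc m 1)), x ∈ Icc m 1 :=
        ae_restrict_mem measurableSet_Icc
      have h2 : ∀ᵐ (x:ℝ) ∂(volume.restrict (Icc m 1)), x ≠ 1 := by
        apply ae_restrict_of_ae
        rw [MeasureTheory.ae_iff]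
        simp only [not_not, setOf_eq_eq_singleton]
        exact measure_singleton 1
      filter_upwards [h1, h2] with x hx hne
      have hx1 : x < 1 := lt_of_le_of_ne hx.2 hne
      have := P x ⟨le_trans hm0.le hx.1, hx1⟩
      simp only [Pi.zero_apply, hLdef, hRdef]
      linarith
    have := intervalIntegral.integral_sub (hRint m 1) (hLint m 1)
    rw [this] at hnn
    linarith
  have hsplitL := intervalIntegral.integral_add_adjacent_intervals (hLint x₀ m) (hLint m 1)
  have hsplitR := intervalIntegral.integral_add_adjacent_intervals (hRint x₀ m) (hRint m 1)
  have key : (∫ x in x₀..(1:ℝ), L x) < ∫ x in x₀..(1:ℝ), R x := by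
    rw [← hsplitL, ← hsplitR]
    linarith
  -- evaluate
  have evalL : (∫ x in x₀..(1:ℝ), L x)
      = α₁ ^ n / ((n : ℝ) * (α₁ - 1) + 1) * (1:ℝ) ^ ((n : ℝ) * (α₁ - 1) + 1)
        - α₁ ^ n / ((n : ℝ) * (α₁ - 1) + 1) * x₀ ^ ((n : ℝ) * (α₁ - 1) + 1)
        - (K * α₁ / α₁ * (1:ℝ) ^ α₁ - K * α₁ / α₁ * x₀ ^ α₁) := by
    rw [hLdef]
    beta_reduce
    rw [intervalIntegral.integral_sub (f := fun x => α₁ ^ n * x ^ ((n : ℝ) * (α₁ - 1)))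
      (g := fun x => K * α₁ * x ^ (α₁ - 1))
      ((continuous_const.mul (Real.continuous_rpow_const hnp)).intervalIntegrable _ _)
      ((continuous_const.mul (Real.continuous_rpow_const
        (by linarith : (0:ℝ) ≤ α₁ - 1))).intervalIntegrable _ _)]
    rw [ftc_pow' (α₁ ^ n) ((n : ℝ) * (α₁ - 1) + 1) _ x₀ 1 (by ring) (by linarith),
      ftc_pow' (K * α₁) α₁ _ x₀ 1 (by ring) h1.le]
  have evalR : (∫ x in x₀..(1:ℝ), R x)
      = α₂ ^ n / ((n : ℝ) * (α₂ - 1) + 1) * (1 - x₀) ^ ((n : ℝ) * (α₂ - 1) + 1)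
        - α₂ ^ n / ((n : ℝ) * (α₂ - 1) + 1) * ((1:ℝ) - 1) ^ ((n : ℝ) * (α₂ - 1) + 1)
        - (K * α₂ / α₂ * (1 - x₀) ^ α₂ - K * α₂ / α₂ * ((1:ℝ) - 1) ^ α₂) := by
    rw [hRdef]
    beta_reduce
    rw [intervalIntegral.integral_sub
      ((int_one_sub_rpow _ hβ₂1 x₀ 1).const_mul (α₂ ^ n))
      ((int_one_sub_rpow _ (by linarith : (-1:ℝ) < α₂ - 1) x₀ 1).const_mul (K * α₂))]
    rw [ftc_one_sub' (α₂ ^ n) ((n : ℝ) * (α₂ - 1) + 1) _ x₀ 1 (by ring) hβ₂0 ht1.le le_rfl,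
      ftc_one_sub' (K * α₂) α₂ _ x₀ 1 (by ring) h2 ht1.le le_rfl]
  rw [evalL, evalR] at key
  have z1 : ((1:ℝ) - 1) ^ ((n : ℝ) * (α₂ - 1) + 1) = 0 := by
    rw [sub_self]; exact Real.zero_rpow (ne_of_gt hβ₂0)
  have z2 : ((1:ℝ) - 1) ^ α₂ = 0 := by
    rw [sub_self]; exact Real.zero_rpow (ne_of_gt h2)
  rw [z1, z2] at key
  have o1 : ((1:ℝ)) ^ ((n : ℝ) * (α₁ - 1) + 1) = 1 := Real.one_rpow _
  have o2 : ((1:ℝ)) ^ α₁ = 1 := Real.one_rpow _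
  rw [o1, o2] at key
  have d1 : K * α₁ / α₁ = K := by field_simp
  have d2 : K * α₂ / α₂ = K := by field_simp
  rw [d1, d2] at key
  linarith

theorem Qhat_gt_max (n : ℕ) (hn : 2 ≤ n) (α₁ α₂ : ℝ)
    (hα₂ : 1 - 1 / (n : ℝ) < α₂) (hα₂1 : α₂ < 1) (hα₁ : 1 < α₁)
    (Q₁ Q₂ : ℝ) (hQ₁ : Q₁ = α₁ ^ n / (n * α₁ - n + 1))
    (hQ₂ : Q₂ = α₂ ^ n / (n * α₂ - n + 1))
    (x₀ : ℝ) (hx₀ : x₀ ∈ Ioo (0 : ℝ) 1)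
    (heq : 1 = (1 - x₀) ^ α₂ + x₀ ^ α₁) :
    max Q₁ Q₂ < Q₁ * x₀ ^ (n * (α₁ - 1) + 1) + Q₂ * (1 - x₀) ^ (n * (α₂ - 1) + 1) := by
  obtain ⟨ht0, ht1⟩ := hx₀
  have hnn : 0 < n := by omega
  have hn0 : (0:ℝ) < (n : ℝ) := by exact_mod_cast hnn
  have hn2 : (2:ℝ) ≤ (n : ℝ) := by exact_mod_cast hn
  have h2 : 0 < α₂ := by
    have h12 : (1:ℝ) / (n:ℝ) ≤ 1 / 2 := by
      apply one_div_le_one_div_of_le <;> linarith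
    linarith
  have e : (n:ℝ) * (1 / (n:ℝ)) = 1 := mul_one_div_cancel (ne_of_gt hn0)
  have hβ₂1 : -1 < (n:ℝ) * (α₂ - 1) := by
    nlinarith [mul_lt_mul_of_pos_left (show -(1/(n:ℝ)) < α₂ - 1 by linarith) hn0]
  have hβ₂0 : 0 < (n:ℝ) * (α₂ - 1) + 1 := by linarith
  have hcross := cross_at_x₀ α₁ α₂ hα₁ h2 hα₂1 ht0 ht1 heq
  obtain ⟨K₁, P1, P1s⟩ := region1 α₁ α₂ n hn hα₁ h2 hα₂1 ht0 ht1 hcross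
  obtain ⟨K₂, P2, P2s⟩ := region2 α₁ α₂ n hn hα₁ h2 hα₂1 ht0 ht1 hcross
  have N1 := integral_ineq1 α₁ α₂ K₁ x₀ n hnn hα₁ h2 hα₂1 ht0 ht1 hβ₂0 P1 P1s
  have N2 := integral_ineq2 α₁ α₂ K₂ x₀ n hnn hα₁ h2 hα₂1 ht0 ht1 hβ₂0 hβ₂1 P2 P2s
  have hQ₁' : Q₁ = α₁ ^ n / ((n:ℝ) * (α₁ - 1) + 1) := by
    rw [hQ₁]; congr 1; ring
  have hQ₂' : Q₂ = α₂ ^ n / ((n:ℝ) * (α₂ - 1) + 1) := by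
    rw [hQ₂]; congr 1; ring
  have hheq : 1 - (1 - x₀) ^ α₂ = x₀ ^ α₁ := by linarith [heq]
  have c1 : K₁ * (1:ℝ) - K₁ * (1 - x₀) ^ α₂ = K₁ * x₀ ^ α₁ := by
    calc K₁ * (1:ℝ) - K₁ * (1 - x₀) ^ α₂ = K₁ * (1 - (1 - x₀) ^ α₂) := by ring
      _ = K₁ * x₀ ^ α₁ := by rw [hheq]
  have c2 : K₂ * (1:ℝ) - K₂ * x₀ ^ α₁ = K₂ * (1 - x₀) ^ α₂ := by
    have h' : 1 - x₀ ^ α₁ = (1 - x₀) ^ α₂ := by linarith [heq]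
    calc K₂ * (1:ℝ) - K₂ * x₀ ^ α₁ = K₂ * (1 - x₀ ^ α₁) := by ring
      _ = K₂ * (1 - x₀) ^ α₂ := by rw [h']
  rw [c1] at N1
  rw [c2] at N2
  rw [hQ₁', hQ₂']
  exact max_lt (by linarith [N2]) (by linarith [N1])
end
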